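/- Let ν ≡ 2 (mod 6) be a positive integer. Then there exists a partial triple system PTS(ν,3) with exactly (3·C(ν,2) − ν/2 − 2)/3 triples whose leave consists of ν/2 pairwise disjoint edges: the vertex set can be partitioned into ν/2 pairs, one of which is contained in no triple and the other (ν−2)/2 of which are each contained in exactly two triples, while every pair of vertices not in the partition is contained in exactly three triples (counted with multiplicity). -/

import Mathlib

/-- The function `g(ν, λ, s)` from the paper. -/
noncomputable def gfun (ν lam s : ℕ) : ℤ :=
  if ν ≤ 2 then 0
  else if (ν % 6 = 0 ∧ lam % 2 = 1) ∨
          (ν % 6 = 2 ∧ (lam % 6 = 1 ∨ lam % 6 = 3)) ∨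
          (ν % 6 = 2 ∧ lam % 6 = 5 ∧ s < ν / 2) ∨
          (ν % 6 = 4 ∧ lam % 2 = 1 ∧ s < ν / 2) then
    ⌊(lam : ℚ) / 3 * (ν.choose 2 : ℚ) - (ν : ℚ) / 6⌋
  else if (ν % 6 = 2 ∧ lam % 6 = 5 ∧ s = ν / 2) ∨
          (ν % 6 = 4 ∧ lam % 2 = 1 ∧ s = ν / 2) then
    ⌊(lam : ℚ) / 3 * (ν.choose 2 : ℚ) - (ν : ℚ) / 6⌋ - 1
  else if (ν % 6 = 2 ∧ lam % 6 = 4 ∧ s = 0) ∨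
          (ν % 6 = 5 ∧ lam % 3 = 1 ∧ s = 0) then
    ⌊(lam : ℚ) / 3 * (ν.choose 2 : ℚ)⌋ - 1
  else ⌊(lam : ℚ) / 3 * (ν.choose 2 : ℚ) - 2 * (s : ℚ) / 3⌋

/-- The function `f(n, ν, Δ₂)` from the paper. -/
noncomputable def ffun (n ν Δ : ℕ) : ℤ :=
  ⌊(ν : ℚ) * ((n : ℚ) - (ν : ℚ)) * (Δ : ℚ) / 2⌋ +
  if Even ((n - ν) * Δ) ∨ Even ν then gfun ν Δ 0 else gfun ν Δ (ν / 2)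

/-- The codegree of a pair `p` of vertices in a 3-multigraph `H`: the number of
triples of `H` (with multiplicity) containing `p`. -/
def codegPair {V : Type*} [DecidableEq V] (H : Multiset (Finset V)) (p : Finset V) : ℕ :=
  Multiset.card (H.filter fun t => p ⊆ t)

namespace Stmt13

open Finset

/-! ### Setup -/

abbrev nn (k : ℕ) : ℕ := 2*k+1
abbrev R (k : ℕ) := ZMod (nn k)
abbrev Y (k : ℕ) := R k × Fin 3

instance (k : ℕ) : NeZero (nn k) := ⟨Nat.succ_ne_zero _⟩

def z (k : ℕ) : Y k := (0,0)

noncomputable def h (k : ℕ) : R k := (2 : R k)⁻¹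

variable {k : ℕ}

lemma unit2 : IsUnit (2 : R k) := by
  have hc : Nat.Coprime 2 (nn k) := by
    rw [Nat.Prime.coprime_iff_not_dvd Nat.prime_two]
    have hn : nn k = 2*k+1 := rfl
    omega
  have := (ZMod.isUnit_iff_coprime 2 (nn k)).mpr hc
  simpa using this

lemma h2 : (2 : R k) * h k = 1 := ZMod.mul_inv_of_unit _ unit2

lemma two_cancel {a b : R k} (hab : 2*a = 2*b) : a = b := by
  have : a = (2*a) * h k := by linear_combination (-a) * (h2 (k := k))
  rw [this, hab]; linear_combination b * (h2 (k := k))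

lemma two_ne_zero' {a : R k} (ha : a ≠ 0) : 2*a ≠ 0 := by
  intro hc
  exact ha (two_cancel (by rw [hc]; ring))

lemma h_mul_two (x : R k) : 2*(x * h k) = x := by
  linear_combination x * (h2 (k := k))

lemma h_ne_zero {x : R k} (hx : x ≠ 0) : x * h k ≠ 0 := by
  intro hc
  apply hx
  have := h_mul_two (k := k) x
  rw [hc] at this; simpa using this.symm

/-! ### neg-val facts -/

lemma val_lt (a : R k) : a.val < nn k := ZMod.val_lt a

lemma val_pos {a : R k} (ha : a ≠ 0) : 0 < a.val := by
  rcases Nat.eq_zero_or_pos a.val with h0 | h0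
  · exfalso; apply ha
    have : ((a.val : ℕ) : R k) = a := by simp [ZMod.natCast_val, ZMod.cast_id]
    rw [← this, h0]; simp
  · exact h0

lemma neg_val' {a : R k} (ha : a ≠ 0) : (-a).val = nn k - a.val := by
  rw [ZMod.neg_val]; simp [ha]

/-- the canonical positive half -/
def posd (k : ℕ) : Finset (R k) := (Finset.Icc 1 k).image (Nat.cast : ℕ → R k)

lemma mem_posd {d : R k} : d ∈ posd k ↔ 1 ≤ d.val ∧ d.val ≤ k := by
  constructor
  · rintro hd
    simp only [posd, mem_image, Finset.mem_Icc] at hd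
    obtain ⟨m, ⟨h1, h2⟩, rfl⟩ := hd
    rw [ZMod.val_cast_of_lt (by show m < 2*k+1; omega)]
    exact ⟨h1, h2⟩
  · rintro ⟨h1, h2⟩
    simp only [posd, mem_image, Finset.mem_Icc]
    exact ⟨d.val, ⟨h1, h2⟩, by simp [ZMod.natCast_val, ZMod.cast_id]⟩

lemma card_posd : (posd k).card = k := by
  rw [posd, Finset.card_image_of_injOn, Nat.card_Icc]
  · omega
  · intro a ha b hb hab
    simp only [Finset.coe_Icc, Set.mem_Icc] at ha hb
    have : ((a : ℕ) : R k).val = ((b : ℕ) : R k).val := by rw [hab]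
    rwa [ZMod.val_cast_of_lt (by show a < 2*k+1; omega), ZMod.val_cast_of_lt (by show b < 2*k+1; omega)] at this

/-- exactly one of `e`, `-e` is in `posd` -/
lemma posd_sign {e : R k} (he : e ≠ 0) : (e ∈ posd k ∧ -e ∉ posd k) ∨ (e ∉ posd k ∧ -e ∈ posd k) := by
  have h1 := val_pos (k := k) he
  have h2 := val_lt (k := k) e
  have h3 := neg_val' (k := k) he
  have hn : nn k = 2*k+1 := rfl
  by_cases hc : e.val ≤ k
  · left
    constructor
    · exact mem_posd.mpr ⟨h1, hc⟩
    · intro hm; have := (mem_posd.mp hm).2; omega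
  · right
    constructor
    · intro hm; have := (mem_posd.mp hm).2; omega
    · refine mem_posd.mpr ⟨by omega, by omega⟩

lemma neg_posd_val {e : R k} (he : e ≠ 0) (h1 : ¬ e.val ≤ k) : (-e) ∈ posd k := by
  have h4 := val_pos (k := k) he
  have h5 := val_lt (k := k) e
  have h6 := neg_val' (k := k) he
  have hn : nn k = 2*k+1 := rfl
  exact mem_posd.mpr ⟨by omega, by omega⟩

/-! ### Blocks -/

def Vk (k : ℕ) (x : R k) : Finset (Y k) := {(x,0),(x,1),(x,2)}
def Lat (k : ℕ) (w d : R k) (i : Fin 3) : Finset (Y k) := {(w+d,i),(w-d,i),(w,i+1)}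
noncomputable def Tv (k : ℕ) (v : R k) : Finset (Y k) := {(v,0),(v * h k,1),(v,2)}

lemma fin3_cases (i j : Fin 3) : j = i ∨ j = i+1 ∨ j = i+2 := by
  fin_cases i <;> fin_cases j <;> decide

lemma fin3_succ_ne (i : Fin 3) : i+1 ≠ i := by fin_cases i <;> decide
lemma fin3_succ2_ne (i : Fin 3) : i+2 ≠ i := by fin_cases i <;> decide
lemma fin3_succ_inj {i j : Fin 3} (hc : i+1 = j+1) : i = j := by
  fin_cases i <;> fin_cases j <;> simp_all <;> exact absurd hc (by decide)
lemma fin3_all (l : Fin 3) : l = 0 ∨ l = 1 ∨ l = 2 := by fin_cases l <;> decide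

lemma mem_Vk {k : ℕ} {p : Y k} {x : R k} : p ∈ Vk k x ↔ p.1 = x := by
  obtain ⟨u, l⟩ := p
  simp only [Vk, mem_insert, mem_singleton, Prod.mk.injEq]
  constructor
  · rintro (⟨hu, -⟩ | ⟨hu, -⟩ | ⟨hu, -⟩) <;> exact hu
  · rintro rfl
    rcases fin3_all l with rfl | rfl | rfl <;> simp
lemma mem_Lat {k : ℕ} {u : R k} {l : Fin 3} {w d : R k} {i : Fin 3} :
    ((u,l) : Y k) ∈ Lat k w d i ↔ (l = i ∧ (u = w+d ∨ u = w-d)) ∨ (l = i+1 ∧ u = w) := by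
  simp only [Lat, mem_insert, mem_singleton, Prod.mk.injEq]
  tauto
lemma mem_Tv {k : ℕ} {u : R k} {l : Fin 3} {v : R k} :
    ((u,l) : Y k) ∈ Tv k v ↔ (l = 0 ∧ u = v) ∨ (l = 1 ∧ u = v * h k) ∨ (l = 2 ∧ u = v) := by
  simp only [Tv, mem_insert, mem_singleton, Prod.mk.injEq]
  tauto

/-! ### The point-deleted Bose system `D` -/

def PV (k : ℕ) : Finset (R k) := univ.erase 0
noncomputable def PLD (k : ℕ) : Finset (R k × R k × Fin 3) :=
  (univ ×ˢ (posd k) ×ˢ univ).filter (fun p => z k ∉ Lat k p.1 p.2.1 p.2.2)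

noncomputable def D (k : ℕ) : Multiset (Finset (Y k)) :=
  ((PV k).val.map (Vk k)) + ((PLD k).val.map (fun p => Lat k p.1 p.2.1 p.2.2))

noncomputable def cnt {k : ℕ} (a b : Y k) (M : Multiset (Finset (Y k))) : ℕ :=
  Multiset.countP (fun t => a ∈ t ∧ b ∈ t) M

lemma cnt_add {k : ℕ} (a b : Y k) (M N : Multiset (Finset (Y k))) :
    cnt a b (M + N) = cnt a b M + cnt a b N := Multiset.countP_add _ _ _

lemma cnt_map {k : ℕ} {α : Type*} (s : Finset α) (f : α → Finset (Y k)) (a b : Y k) :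
    cnt a b (s.val.map f) = (s.filter (fun p => a ∈ f p ∧ b ∈ f p)).card := by
  classical
  rw [cnt, Multiset.countP_map]
  rfl

lemma cnt_comm {k : ℕ} (a b : Y k) (M : Multiset (Finset (Y k))) :
    cnt a b M = cnt b a M := by
  unfold cnt
  apply Multiset.countP_congr rfl
  intro t _
  simp [and_comm]

lemma mem_PLD {k : ℕ} {p : R k × R k × Fin 3} :
    p ∈ PLD k ↔ p.2.1 ∈ posd k ∧ z k ∉ Lat k p.1 p.2.1 p.2.2 := by
  simp [PLD, Finset.mem_product]

/-! ### Counting pairs in D -/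

lemma zmem_Lat {k : ℕ} {w d : R k} {i : Fin 3} :
    z k ∈ Lat k w d i ↔ (i = 0 ∧ (w+d = 0 ∨ w-d = 0)) ∨ (i = 2 ∧ w = 0) := by
  show ((0,0) : Y k) ∈ _ ↔ _
  rw [mem_Lat]
  constructor
  · rintro (⟨h1, h2⟩ | ⟨h1, h2⟩)
    · exact Or.inl ⟨h1.symm, by tauto⟩
    · right
      refine ⟨?_, h2.symm⟩
      rcases fin3_all i with rfl | rfl | rfl
      · exact absurd h1 (by decide)
      · exact absurd h1 (by decide)
      · rfl
  · rintro (⟨rfl, h2⟩ | ⟨rfl, h2⟩)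
    · exact Or.inl ⟨rfl, by tauto⟩
    · exact Or.inr ⟨by decide, h2.symm⟩

lemma lat_pair_same {k : ℕ} {x y w d w0 e : R k} {i j : Fin 3} (hxy : x ≠ y)
    (keyx : w0 + e = x) (keyy : w0 - e = y) :
    (((x,i) : Y k) ∈ Lat k w d j ∧ ((y,i) : Y k) ∈ Lat k w d j) ↔
      (j = i ∧ w = w0 ∧ (d = e ∨ d = -e)) := by
  rw [mem_Lat, mem_Lat]
  constructor
  · rintro ⟨hx, hy⟩
    rcases hx with ⟨hij, hxp⟩ | ⟨hij, hxp⟩ <;> rcases hy with ⟨hij2, hyp⟩ | ⟨hij2, hyp⟩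
    · refine ⟨hij.symm, ?_⟩
      rcases hxp with hxp | hxp <;> rcases hyp with hyp | hyp
      · exact absurd (hxp.trans hyp.symm) hxy
      · constructor
        · apply two_cancel
          linear_combination -hxp - hyp - keyx - keyy
        · left
          apply two_cancel
          linear_combination -hxp + hyp - keyx + keyy
      · constructor
        · apply two_cancel
          linear_combination -hxp - hyp - keyx - keyy
        · right
          apply two_cancel
          linear_combination hxp - hyp + keyx - keyy
      · exact absurd (hxp.trans hyp.symm) hxy
    · exfalso; revert hij hij2; fin_cases i <;> fin_cases j <;> decide
    · exfalso; revert hij hij2; fin_cases i <;> fin_cases j <;> decide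
    · exact absurd (hxp.trans hyp.symm) hxy
  · rintro ⟨rfl, rfl, rfl | rfl⟩
    · exact ⟨Or.inl ⟨rfl, Or.inl keyx.symm⟩, Or.inl ⟨rfl, Or.inr keyy.symm⟩⟩
    · constructor
      · exact Or.inl ⟨rfl, Or.inr (by linear_combination -keyx)⟩
      · exact Or.inl ⟨rfl, Or.inl (by linear_combination -keyy)⟩

lemma lat_pair_cross {k : ℕ} {x y w d : R k} {i j : Fin 3} :
    (((x,i) : Y k) ∈ Lat k w d j ∧ ((y,i+1) : Y k) ∈ Lat k w d j) ↔
      (j = i ∧ w = y ∧ (d = x - y ∨ d = y - x)) := by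
  rw [mem_Lat, mem_Lat]
  constructor
  · rintro ⟨hx, hy⟩
    rcases hx with ⟨hij, hxp⟩ | ⟨hij, hxp⟩ <;> rcases hy with ⟨hij2, hyp⟩ | ⟨hij2, hyp⟩
    · exfalso; revert hij hij2; fin_cases i <;> fin_cases j <;> decide
    · refine ⟨hij.symm, hyp.symm, ?_⟩
      rcases hxp with hxp | hxp
      · left; linear_combination -hxp + hyp
      · right; linear_combination hxp - hyp
    · exfalso; revert hij hij2; fin_cases i <;> fin_cases j <;> decide
    · exfalso; revert hij hij2; fin_cases i <;> fin_cases j <;> decide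
  · rintro ⟨rfl, rfl, rfl | rfl⟩
    · exact ⟨Or.inl ⟨rfl, Or.inl (by ring)⟩, Or.inr ⟨rfl, rfl⟩⟩
    · exact ⟨Or.inl ⟨rfl, Or.inr (by ring)⟩, Or.inr ⟨rfl, rfl⟩⟩

lemma vk_pair {k : ℕ} {x y v : R k} {i j : Fin 3} :
    (((x,i) : Y k) ∈ Vk k v ∧ ((y,j) : Y k) ∈ Vk k v) ↔ (v = x ∧ v = y) := by
  rw [mem_Vk, mem_Vk]
  exact ⟨fun ⟨h1, h2⟩ => ⟨h1.symm, h2.symm⟩, fun ⟨h1, h2⟩ => ⟨h1.symm, h2.symm⟩⟩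

lemma cnt_D_split {k : ℕ} (a b : Y k) :
    cnt a b (D k) = ((PV k).filter (fun v => a ∈ Vk k v ∧ b ∈ Vk k v)).card
      + ((PLD k).filter (fun p => a ∈ Lat k p.1 p.2.1 p.2.2 ∧ b ∈ Lat k p.1 p.2.1 p.2.2)).card := by
  rw [D, cnt_add, cnt_map, cnt_map]

lemma cnt_same {k : ℕ} (i : Fin 3) (x y : R k) (hxy : x ≠ y)
    (hxz : ((x,i) : Y k) ≠ z k) (hyz : ((y,i) : Y k) ≠ z k) :
    cnt ((x,i) : Y k) (y,i) (D k) =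
      if i = 2 ∧ x + y = 0 then 0 else 1 := by
  classical
  have keyx : (x+y) * h k + (x-y) * h k = x := by
    ring_nf
    linear_combination x * (h2 (k := k))
  have keyy : (x+y) * h k - (x-y) * h k = y := by
    ring_nf
    linear_combination y * (h2 (k := k))
  have he : (x - y) * h k ≠ 0 := h_ne_zero (k := k) (sub_ne_zero.mpr hxy)
  rw [cnt_D_split]
  have hV : ((PV k).filter (fun v => ((x,i) : Y k) ∈ Vk k v ∧ ((y,i) : Y k) ∈ Vk k v)).card = 0 := by
    rw [Finset.card_eq_zero, Finset.filter_eq_empty_iff]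
    intro v _
    rw [vk_pair]
    rintro ⟨rfl, rfl⟩
    exact hxy rfl
  rw [hV, Nat.zero_add]
  obtain ⟨δ, hδp, hδe⟩ : ∃ δ : R k, δ ∈ posd k ∧ (δ = (x-y) * h k ∨ δ = -((x-y) * h k)) := by
    rcases posd_sign (k := k) he with ⟨h1, -⟩ | ⟨-, h1⟩
    · exact ⟨_, h1, Or.inl rfl⟩
    · exact ⟨_, h1, Or.inr rfl⟩
  have honeof : ∀ d : R k, d ∈ posd k → (d = (x-y) * h k ∨ d = -((x-y) * h k)) → d = δ := by
    intro d hd hdor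
    rcases posd_sign (k := k) he with ⟨h1, h2⟩ | ⟨h1, h2⟩
    · rcases hdor with rfl | rfl
      · rcases hδe with rfl | rfl
        · rfl
        · exact absurd hδp h2
      · exact absurd hd h2
    · rcases hdor with rfl | rfl
      · exact absurd hd h1
      · rcases hδe with rfl | rfl
        · exact absurd hδp h1
        · rfl
  by_cases hbad : i = 2 ∧ x + y = 0
  · rw [if_pos hbad, Finset.card_eq_zero, Finset.filter_eq_empty_iff]
    rintro ⟨w, d, j⟩ hp
    dsimp only
    rw [lat_pair_same hxy keyx keyy]
    rintro ⟨rfl, rfl, -⟩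
    obtain ⟨-, hz⟩ := mem_PLD.mp hp
    apply hz
    dsimp only
    rw [zmem_Lat]
    right
    refine ⟨hbad.1, ?_⟩
    apply two_cancel
    have h2w0 : (2:R k) * ((x+y) * h k) = x + y := by linear_combination keyx + keyy
    rw [h2w0, hbad.2]
    ring
  · rw [if_neg hbad, Finset.card_eq_one]
    refine ⟨((x+y) * h k, δ, i), ?_⟩
    apply Finset.ext
    rintro ⟨w, d, j⟩
    rw [Finset.mem_filter, Finset.mem_singleton]
    constructor
    · rintro ⟨hpl, hcond⟩
      dsimp only at hcond
      rw [lat_pair_same hxy keyx keyy] at hcond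
      obtain ⟨rfl, rfl, hd⟩ := hcond
      obtain ⟨hdp, -⟩ := mem_PLD.mp hpl
      have := honeof d hdp hd
      rw [this]
    · rintro hc
      rw [Prod.mk.injEq, Prod.mk.injEq] at hc
      obtain ⟨rfl, rfl, rfl⟩ := hc
      constructor
      · rw [mem_PLD]
        refine ⟨hδp, ?_⟩
        dsimp only
        rw [zmem_Lat]
        rintro (⟨hi0, hor⟩ | ⟨hi2, hw0⟩)
        · have hx0 : x ≠ 0 := fun hcc => hxz (by rw [hi0, hcc]; rfl)
          have hy0 : y ≠ 0 := fun hcc => hyz (by rw [hi0, hcc]; rfl)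
          rcases hδe with rfl | rfl
          · rcases hor with hh | hh
            · exact hx0 (by linear_combination hh - keyx)
            · exact hy0 (by linear_combination hh - keyy)
          · rcases hor with hh | hh
            · exact hy0 (by linear_combination hh - keyy)
            · exact hx0 (by linear_combination hh - keyx)
        · apply hbad
          refine ⟨hi2, ?_⟩
          linear_combination 2 * hw0 - keyx - keyy
      · dsimp only
        rw [lat_pair_same hxy keyx keyy]
        exact ⟨rfl, rfl, hδe⟩

lemma cnt_cross {k : ℕ} (i : Fin 3) (x y : R k)
    (hxz : ((x,i) : Y k) ≠ z k) (hyz : ((y,i+1) : Y k) ≠ z k) :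
    cnt ((x,i) : Y k) (y,i+1) (D k) =
      if (x = y ∧ x = 0) ∨ (x ≠ y ∧ i = 0 ∧ x = 2*y) then 0 else 1 := by
  classical
  rw [cnt_D_split]
  have hV : ((PV k).filter (fun v => ((x,i) : Y k) ∈ Vk k v ∧ ((y,i+1) : Y k) ∈ Vk k v)).card
      = if x = y ∧ x ≠ 0 then 1 else 0 := by
    by_cases hc : x = y ∧ x ≠ 0
    · rw [if_pos hc, Finset.card_eq_one]
      refine ⟨x, ?_⟩
      apply Finset.ext
      intro v
      rw [Finset.mem_filter, Finset.mem_singleton, vk_pair]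
      constructor
      · rintro ⟨-, rfl, -⟩; rfl
      · rintro rfl
        exact ⟨Finset.mem_erase.mpr ⟨hc.2, Finset.mem_univ _⟩, rfl, hc.1.symm ▸ rfl⟩
    · rw [if_neg hc, Finset.card_eq_zero, Finset.filter_eq_empty_iff]
      intro v hv
      rw [vk_pair]
      rintro ⟨rfl, rfl⟩
      exact hc ⟨rfl, (Finset.mem_erase.mp hv).1⟩
  rw [hV]
  have hL : ((PLD k).filter (fun p => ((x,i) : Y k) ∈ Lat k p.1 p.2.1 p.2.2 ∧ ((y,i+1) : Y k) ∈ Lat k p.1 p.2.1 p.2.2)).card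
      = if x ≠ y ∧ ¬(i = 0 ∧ x = 2*y) then 1 else 0 := by
    by_cases hc : x ≠ y ∧ ¬(i = 0 ∧ x = 2*y)
    · rw [if_pos hc]
      obtain ⟨hxy, hni⟩ := hc
      have hd0 : x - y ≠ 0 := sub_ne_zero.mpr hxy
      obtain ⟨δ, hδp, hδe⟩ : ∃ δ : R k, δ ∈ posd k ∧ (δ = x - y ∨ δ = -(x - y)) := by
        rcases posd_sign (k := k) hd0 with ⟨h1, -⟩ | ⟨-, h1⟩
        · exact ⟨_, h1, Or.inl rfl⟩
        · exact ⟨_, h1, Or.inr rfl⟩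
      have honeof : ∀ d : R k, d ∈ posd k → (d = x - y ∨ d = -(x-y)) → d = δ := by
        intro d hd hdor
        rcases posd_sign (k := k) hd0 with ⟨h1, h2⟩ | ⟨h1, h2⟩
        · rcases hdor with rfl | rfl
          · rcases hδe with rfl | rfl
            · rfl
            · exact absurd hδp h2
          · exact absurd hd h2
        · rcases hdor with rfl | rfl
          · exact absurd hd h1
          · rcases hδe with rfl | rfl
            · exact absurd hδp h1
            · rfl
      rw [Finset.card_eq_one]
      refine ⟨(y, δ, i), ?_⟩
      apply Finset.ext
      rintro ⟨w, d, j⟩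
      rw [Finset.mem_filter, Finset.mem_singleton]
      constructor
      · rintro ⟨hpl, hcond⟩
        dsimp only at hcond
        rw [lat_pair_cross] at hcond
        obtain ⟨rfl, rfl, hd⟩ := hcond
        obtain ⟨hdp, -⟩ := mem_PLD.mp hpl
        have hdd : d = δ := by
          apply honeof d hdp
          rcases hd with rfl | rfl
          · exact Or.inl rfl
          · exact Or.inr (by ring)
        rw [hdd]
      · rintro hc2
        rw [Prod.mk.injEq, Prod.mk.injEq] at hc2
        obtain ⟨rfl, rfl, rfl⟩ := hc2
        constructor
        · rw [mem_PLD]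
          refine ⟨hδp, ?_⟩
          dsimp only
          rw [zmem_Lat]
          rintro (⟨hi0, hor⟩ | ⟨hi2, hw0⟩)
          · have hx0 : x ≠ 0 := fun hcc => hxz (by rw [hi0, hcc]; rfl)
            apply hni
            refine ⟨hi0, ?_⟩
            rcases hδe with rfl | rfl
            · rcases hor with hh | hh
              · exact absurd (by linear_combination hh : x = 0) hx0
              · linear_combination -hh
            · rcases hor with hh | hh
              · linear_combination -hh
              · exact absurd (by linear_combination hh : x = 0) hx0
          · apply hyz
            rw [hi2, hw0]
            rfl
        · dsimp only
          rw [lat_pair_cross]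
          refine ⟨rfl, rfl, ?_⟩
          rcases hδe with rfl | rfl
          · exact Or.inl rfl
          · exact Or.inr (by ring)
    · rw [if_neg hc, Finset.card_eq_zero, Finset.filter_eq_empty_iff]
      rintro ⟨w, d, j⟩ hp
      dsimp only
      rw [lat_pair_cross]
      rintro ⟨rfl, hw, hd⟩
      obtain ⟨hdp, hz⟩ := mem_PLD.mp hp
      dsimp only at hdp hz
      push_neg at hc
      have hd0 : d ≠ 0 := by
        intro hc0
        have := (mem_posd.mp hdp).1
        rw [hc0] at this
        simp at this
      have hxy : x ≠ y := by
        intro hcc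
        apply hd0
        rcases hd with rfl | rfl <;> rw [hcc] <;> ring
      obtain ⟨hi0, hx2y⟩ := hc hxy
      apply hz
      rw [zmem_Lat]
      left
      refine ⟨hi0, ?_⟩
      rcases hd with rfl | rfl
      · right; linear_combination hw - hx2y
      · left; linear_combination hw - hx2y
  rw [hL]
  rcases eq_or_ne x y with rfl | hxy
  · rcases eq_or_ne x 0 with rfl | hx0
    · simp
    · rw [if_pos ⟨rfl, hx0⟩, if_neg (fun hcc => hcc.1 rfl),
        if_neg (by rintro (⟨-, hcc⟩ | ⟨hcc, -⟩); exacts [hx0 hcc, hcc rfl])]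
  · rw [if_neg (fun hcc => hxy hcc.1)]
    by_cases hcond : i = 0 ∧ x = 2*y
    · rw [if_neg (fun hcc => hcc.2 hcond), if_pos (Or.inr ⟨hxy, hcond⟩)]
    · rw [if_pos ⟨hxy, hcond⟩, if_neg (by rintro (⟨hcc, -⟩ | ⟨-, hcc⟩); exacts [hxy hcc, hcond hcc])]

/-! ### Leave predicates -/

def isE0 (k : ℕ) (a b : Y k) : Prop :=
  (a = ((0:R k),(1:Fin 3)) ∧ b = (0,2)) ∨ (a = (0,2) ∧ b = (0,1))
def isA (k : ℕ) (a b : Y k) : Prop := ∃ v : R k, v ≠ 0 ∧ a = (v,2) ∧ b = (-v,2)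
def isAB (k : ℕ) (a b : Y k) : Prop :=
  ∃ y : R k, y ≠ 0 ∧ ((a = (2*y,0) ∧ b = (y,1)) ∨ (b = (2*y,0) ∧ a = (y,1)))
def Fpred (k : ℕ) (a b : Y k) : Prop := isE0 k a b ∨ isA k a b ∨ isAB k a b

lemma isE0_symm {k : ℕ} {a b : Y k} (hf : isE0 k a b) : isE0 k b a := by
  rcases hf with ⟨h1, h2⟩ | ⟨h1, h2⟩
  · exact Or.inr ⟨h2, h1⟩
  · exact Or.inl ⟨h2, h1⟩

lemma isA_symm {k : ℕ} {a b : Y k} (hf : isA k a b) : isA k b a := by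
  obtain ⟨v, hv, h1, h2⟩ := hf
  refine ⟨-v, fun hc => hv (by simpa using congrArg Neg.neg hc), h2, ?_⟩
  rw [neg_neg]
  exact h1

lemma isAB_symm {k : ℕ} {a b : Y k} (hf : isAB k a b) : isAB k b a := by
  obtain ⟨y, hy, h⟩ := hf
  exact ⟨y, hy, h.symm⟩

lemma Fpred_symm {k : ℕ} {a b : Y k} (hf : Fpred k a b) : Fpred k b a := by
  rcases hf with hf | hf | hf
  exacts [Or.inl (isE0_symm hf), Or.inr (Or.inl (isA_symm hf)), Or.inr (Or.inr (isAB_symm hf))]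

lemma ne_z_iff {k : ℕ} {x : R k} {i : Fin 3} : ((x,i) : Y k) ≠ z k ↔ ¬(x = 0 ∧ i = 0) := by
  show ((x,i) : Y k) ≠ (0,0) ↔ _
  rw [Ne, Prod.mk.injEq]

lemma Fpred_same {k : ℕ} {x y : R k} {i : Fin 3} (hxy : x ≠ y) :
    Fpred k (x,i) (y,i) ↔ (i = 2 ∧ x + y = 0) := by
  constructor
  · rintro (hf | hf | hf)
    · rcases hf with ⟨h1, h2⟩ | ⟨h1, h2⟩ <;>
        (rw [Prod.mk.injEq] at h1 h2
         exact absurd (h1.2.symm.trans h2.2) (by decide))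
    · obtain ⟨v, hv, h1, h2⟩ := hf
      rw [Prod.mk.injEq] at h1 h2
      exact ⟨h1.2, by rw [h1.1, h2.1]; ring⟩
    · obtain ⟨w, hw, hf | hf⟩ := hf <;>
        (obtain ⟨h1, h2⟩ := hf
         rw [Prod.mk.injEq] at h1 h2
         exact absurd (h1.2.symm.trans h2.2) (by decide))
  · rintro ⟨rfl, hsum⟩
    have hx0 : x ≠ 0 := by
      intro hc
      apply hxy
      rw [hc]
      have : y = 0 := by linear_combination hsum - hc
      rw [this]
    refine Or.inr (Or.inl ⟨x, hx0, rfl, ?_⟩)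
    rw [Prod.mk.injEq]
    exact ⟨by linear_combination hsum, rfl⟩

lemma Fpred_cross {k : ℕ} {x y : R k} {i : Fin 3}
    (hxz : ((x,i) : Y k) ≠ z k) (hyz : ((y,i+1) : Y k) ≠ z k) :
    Fpred k (x,i) (y,i+1) ↔ ((x = y ∧ x = 0) ∨ (x ≠ y ∧ i = 0 ∧ x = 2*y)) := by
  constructor
  · rintro (hf | hf | hf)
    · rcases hf with ⟨h1, h2⟩ | ⟨h1, h2⟩
      · rw [Prod.mk.injEq] at h1 h2
        exact Or.inl ⟨h1.1.trans h2.1.symm, h1.1⟩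
      · rw [Prod.mk.injEq] at h1 h2
        exfalso
        have hi2 : i = 2 := h1.2
        have : i + 1 = 1 := h2.2
        rw [hi2] at this
        exact absurd this (by decide)
    · obtain ⟨v, hv, h1, h2⟩ := hf
      rw [Prod.mk.injEq] at h1 h2
      exfalso
      have : i + 1 = 2 := h2.2
      rw [h1.2] at this
      exact absurd this (by decide)
    · obtain ⟨w, hw, hf | hf⟩ := hf
      · obtain ⟨h1, h2⟩ := hf
        rw [Prod.mk.injEq] at h1 h2
        right
        have hyw : y = w := h2.1
        refine ⟨?_, h1.2, by rw [h1.1, hyw]⟩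
        rw [h1.1, hyw]
        intro hc
        exact hw (by linear_combination hc)
      · obtain ⟨h1, h2⟩ := hf
        rw [Prod.mk.injEq] at h1 h2
        exfalso
        have : i + 1 = 0 := h1.2
        rw [h2.2] at this
        exact absurd this (by decide)
  · rintro (⟨hxy2, hx0⟩ | ⟨hxy, hi0, h2y⟩)
    · subst hx0
      have hy0 : y = 0 := hxy2.symm
      subst hy0
      have hi : i ≠ 0 := by
        intro hc
        exact (ne_z_iff.mp hxz) ⟨rfl, hc⟩
      have hi2 : i ≠ 2 := by
        intro hc
        apply ne_z_iff.mp hyz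
        refine ⟨rfl, ?_⟩
        rw [hc]
        decide
      rcases fin3_all i with rfl | rfl | rfl
      · exact absurd rfl hi
      · exact Or.inl (Or.inl ⟨rfl, rfl⟩)
      · exact absurd rfl hi2
    · have hy0 : y ≠ 0 := by
        intro hc
        exact hxy (by linear_combination h2y + hc)
      refine Or.inr (Or.inr ⟨y, hy0, Or.inl ⟨?_, ?_⟩⟩)
      · rw [Prod.mk.injEq]
        exact ⟨h2y, hi0⟩
      · rw [Prod.mk.injEq]
        refine ⟨rfl, by rw [hi0]; decide⟩

lemma fin3_add21 (i : Fin 3) : (i+2)+1 = i := by fin_cases i <;> decide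

lemma fin3_cases' (i j : Fin 3) : i = j ∨ j = i+1 ∨ j = i+2 := by
  fin_cases i <;> fin_cases j <;> decide

open Classical in
lemma cD_eq {k : ℕ} (a b : Y k) (hab : a ≠ b) (haz : a ≠ z k) (hbz : b ≠ z k) :
    cnt a b (D k) = if Fpred k a b then 0 else 1 := by
  obtain ⟨x, i⟩ := a
  obtain ⟨y, j⟩ := b
  rcases fin3_cases' i j with rfl | rfl | rfl
  · have hxy : x ≠ y := by
      intro hc
      exact hab (by rw [hc])
    rw [cnt_same i x y hxy haz hbz]
    by_cases hF : Fpred k (x,i) (y,i)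
    · rw [if_pos ((Fpred_same hxy).mp hF), if_pos hF]
    · rw [if_neg (fun hc => hF ((Fpred_same hxy).mpr hc)), if_neg hF]
  · rw [cnt_cross i x y haz hbz]
    by_cases hF : Fpred k (x,i) (y,i+1)
    · rw [if_pos ((Fpred_cross haz hbz).mp hF), if_pos hF]
    · rw [if_neg (fun hc => hF ((Fpred_cross haz hbz).mpr hc)), if_neg hF]
  · have e1 : ((x, i) : Y k) = (x, (i+2)+1) := by rw [fin3_add21]
    have haz' : ((x, (i+2)+1) : Y k) ≠ z k := by rw [← e1]; exact haz
    rw [cnt_comm, e1, cnt_cross (i+2) y x hbz haz']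
    have hiff : Fpred k (x,(i+2)+1) (y,i+2) ↔ ((y = x ∧ y = 0) ∨ (y ≠ x ∧ i+2 = 0 ∧ y = 2*x)) := by
      constructor
      · intro hF
        exact (Fpred_cross hbz haz').mp (Fpred_symm hF)
      · intro hc
        exact Fpred_symm ((Fpred_cross hbz haz').mpr hc)
    by_cases hF : Fpred k (x,(i+2)+1) (y,i+2)
    · rw [if_pos (hiff.mp hF), if_pos hF]
    · rw [if_neg (fun hc => hF (hiff.mpr hc)), if_neg hF]

/-! ### The rotation -/

noncomputable def rotf (k : ℕ) (p : Y k) : Y k :=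
  if p.1 = 0 then p else
  if p.2 = 0 then (p.1 * h k, 1) else
  if p.2 = 1 then (2*p.1, 2) else (p.1, 0)

noncomputable def rotinv (k : ℕ) (p : Y k) : Y k :=
  if p.1 = 0 then p else
  if p.2 = 0 then (p.1, 2) else
  if p.2 = 1 then (2*p.1, 0) else (p.1 * h k, 1)

lemma rotf_zero {k : ℕ} (l : Fin 3) : rotf k (0, l) = (0, l) := by simp [rotf]
lemma rotinv_zero {k : ℕ} (l : Fin 3) : rotinv k (0, l) = (0, l) := by simp [rotinv]
lemma rotf_e0 {k : ℕ} {v : R k} (hv : v ≠ 0) : rotf k (v, 0) = (v * h k, 1) := by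
  simp [rotf, hv]
lemma rotf_e1 {k : ℕ} {v : R k} (hv : v ≠ 0) : rotf k (v, 1) = (2*v, 2) := by
  simp [rotf, hv]
lemma rotf_e2 {k : ℕ} {v : R k} (hv : v ≠ 0) : rotf k (v, 2) = (v, 0) := by
  simp [rotf, hv]
lemma rotinv_e0 {k : ℕ} {v : R k} (hv : v ≠ 0) : rotinv k (v, 0) = (v, 2) := by
  simp [rotinv, hv]
lemma rotinv_e1 {k : ℕ} {v : R k} (hv : v ≠ 0) : rotinv k (v, 1) = (2*v, 0) := by
  simp [rotinv, hv]
lemma rotinv_e2 {k : ℕ} {v : R k} (hv : v ≠ 0) : rotinv k (v, 2) = (v * h k, 1) := by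
  simp [rotinv, hv]

lemma two_h (k : ℕ) (v : R k) : 2 * v * h k = v := by
  linear_combination v * (h2 (k := k))

lemma rotf_rotinv {k : ℕ} (p : Y k) : rotf k (rotinv k p) = p := by
  obtain ⟨v, l⟩ := p
  rcases eq_or_ne v 0 with rfl | hv
  · rw [rotinv_zero, rotf_zero]
  · rcases fin3_all l with rfl | rfl | rfl
    · rw [rotinv_e0 hv, rotf_e2 hv]
    · rw [rotinv_e1 hv, rotf_e0 (two_ne_zero' hv), show (2*v) * h k = v from by
        linear_combination v * (h2 (k := k))]
    · rw [rotinv_e2 hv, rotf_e1 (h_ne_zero hv), show (2*(v * h k) : R k) = v from h_mul_two v]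

lemma rotinv_rotf {k : ℕ} (p : Y k) : rotinv k (rotf k p) = p := by
  obtain ⟨v, l⟩ := p
  rcases eq_or_ne v 0 with rfl | hv
  · rw [rotf_zero, rotinv_zero]
  · rcases fin3_all l with rfl | rfl | rfl
    · rw [rotf_e0 hv, rotinv_e1 (h_ne_zero hv), show (2*(v * h k) : R k) = v from h_mul_two v]
    · rw [rotf_e1 hv, rotinv_e2 (two_ne_zero' hv), show (2*v) * h k = v from by
        linear_combination v * (h2 (k := k))]
    · rw [rotf_e2 hv, rotinv_e0 hv]

lemma rotf_inj {k : ℕ} : Function.Injective (rotf k) :=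
  Function.LeftInverse.injective (rotinv_rotf (k := k))

lemma rotinv_inj {k : ℕ} : Function.Injective (rotinv k) :=
  Function.LeftInverse.injective (rotf_rotinv (k := k))

lemma rotinv_z {k : ℕ} : rotinv k (z k) = z k := rotinv_zero 0
lemma rotf_z {k : ℕ} : rotf k (z k) = z k := rotf_zero 0

lemma rotinv_ne_z {k : ℕ} {a : Y k} (ha : a ≠ z k) : rotinv k a ≠ z k := by
  intro hc
  apply ha
  have := congrArg (rotf k) hc
  rw [rotf_rotinv, rotf_z] at this
  exact this

lemma mem_image_rotf {k : ℕ} {a : Y k} {t : Finset (Y k)} :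
    a ∈ t.image (rotf k) ↔ rotinv k a ∈ t := by
  constructor
  · intro hmem
    obtain ⟨u, hu, hu2⟩ := Finset.mem_image.mp hmem
    rwa [← hu2, rotinv_rotf]
  · intro hmem
    exact Finset.mem_image.mpr ⟨rotinv k a, hmem, rotf_rotinv a⟩

lemma cnt_image_rotf {k : ℕ} (a b : Y k) (M : Multiset (Finset (Y k))) :
    cnt a b (M.map (Finset.image (rotf k))) = cnt (rotinv k a) (rotinv k b) M := by
  unfold cnt
  rw [Multiset.countP_map]
  rw [Multiset.countP_eq_card_filter]
  apply congrArg
  apply Multiset.filter_congr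
  intro t _
  rw [mem_image_rotf, mem_image_rotf]

/-! ### The extra triangles -/

noncomputable def Ttri (k : ℕ) : Multiset (Finset (Y k)) :=
  ((univ.erase (0:R k)).val).map (Tv k)

def isTedge (k : ℕ) (a b : Y k) : Prop := ∃ v : R k, v ≠ 0 ∧ a ∈ Tv k v ∧ b ∈ Tv k v

lemma Tv_mem_unique {k : ℕ} {a : Y k} {v v' : R k} (h1 : a ∈ Tv k v) (h2 : a ∈ Tv k v') :
    v = v' := by
  obtain ⟨u, l⟩ := a
  rw [mem_Tv] at h1 h2
  rcases h1 with ⟨hl, hu⟩ | ⟨hl, hu⟩ | ⟨hl, hu⟩ <;>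
    rcases h2 with ⟨hl', hu'⟩ | ⟨hl', hu'⟩ | ⟨hl', hu'⟩ <;>
      (try (exfalso; rw [hl] at hl'; exact absurd hl' (by decide))) <;>
      (try exact hu.symm.trans hu')
  · -- l = 1 : u = v h = v' h
    apply two_cancel
    have hvv := hu.symm.trans hu'
    linear_combination 4 * hvv - 2*(v - v') * (h2 (k := k))

open Classical in
lemma cnt_T {k : ℕ} (a b : Y k) :
    cnt a b (Ttri k) = if isTedge k a b then 1 else 0 := by
  rw [Ttri, cnt_map]
  by_cases hT : isTedge k a b
  · rw [if_pos hT]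
    obtain ⟨v0, hv0, ha, hb⟩ := hT
    rw [Finset.card_eq_one]
    refine ⟨v0, ?_⟩
    apply Finset.ext
    intro v
    rw [Finset.mem_filter, Finset.mem_singleton]
    constructor
    · rintro ⟨-, ha', -⟩
      exact Tv_mem_unique ha' ha
    · rintro rfl
      exact ⟨Finset.mem_erase.mpr ⟨hv0, Finset.mem_univ _⟩, ha, hb⟩
  · rw [if_neg hT, Finset.card_eq_zero, Finset.filter_eq_empty_iff]
    intro v hv
    rintro ⟨ha, hb⟩
    exact hT ⟨v, (Finset.mem_erase.mp hv).1, ha, hb⟩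

/-! ### The full system -/

noncomputable def H0 (k : ℕ) : Multiset (Finset (Y k)) :=
  D k + (D k).map (Finset.image (rotf k)) +
    ((D k).map (Finset.image (rotf k))).map (Finset.image (rotf k)) + Ttri k

open Classical in
lemma cnt_H0 {k : ℕ} (a b : Y k) (hab : a ≠ b) (haz : a ≠ z k) (hbz : b ≠ z k) :
    cnt a b (H0 k) =
      (if Fpred k a b then 0 else 1) +
      (if Fpred k (rotinv k a) (rotinv k b) then 0 else 1) +
      (if Fpred k (rotinv k (rotinv k a)) (rotinv k (rotinv k b)) then 0 else 1) +
      (if isTedge k a b then 1 else 0) := by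
  rw [H0, cnt_add, cnt_add, cnt_add, cnt_image_rotf, cnt_image_rotf, cnt_image_rotf,
    cD_eq a b hab haz hbz,
    cD_eq _ _ (fun hc => hab (rotinv_inj hc)) (rotinv_ne_z haz) (rotinv_ne_z hbz),
    cD_eq _ _ (fun hc => hab (rotinv_inj (rotinv_inj hc)))
      (rotinv_ne_z (rotinv_ne_z haz)) (rotinv_ne_z (rotinv_ne_z hbz)),
    cnt_T a b]

/-! ### Shapes -/

def isRungL (k : ℕ) (l : Fin 3) (a b : Y k) : Prop := ∃ v : R k, v ≠ 0 ∧ a = (v,l) ∧ b = (-v,l)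
def isRung (k : ℕ) (a b : Y k) : Prop := ∃ l, isRungL k l a b
def bcE (k : ℕ) (a b : Y k) : Prop :=
  ∃ y : R k, y ≠ 0 ∧ ((a = (y,1) ∧ b = (2*y,2)) ∨ (b = (y,1) ∧ a = (2*y,2)))
def caE (k : ℕ) (a b : Y k) : Prop :=
  ∃ v : R k, v ≠ 0 ∧ ((a = (v,0) ∧ b = (v,2)) ∨ (b = (v,0) ∧ a = (v,2)))

lemma isA_eq_rung2 {k : ℕ} {a b : Y k} : isA k a b ↔ isRungL k 2 a b := Iff.rfl

lemma rot_eq_of {k : ℕ} {a p : Y k} (hp : rotinv k a = p) : a = rotf k p := by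
  rw [← hp, rotf_rotinv]

lemma rot2_eq_of {k : ℕ} {a p : Y k} (hp : rotinv k (rotinv k a) = p) : a = rotf k (rotf k p) := by
  rw [← hp, rotf_rotinv, rotf_rotinv]

lemma neg_ne {k : ℕ} {v : R k} (hv : v ≠ 0) : -v ≠ 0 := fun hc => hv (neg_eq_zero.mp hc)

lemma R1 {k : ℕ} (a b : Y k) :
    Fpred k (rotinv k a) (rotinv k b) ↔ (isE0 k a b ∨ isRungL k 0 a b ∨ bcE k a b) := by
  constructor
  · rintro (hf | hf | hf)
    · rcases hf with ⟨h1, h2⟩ | ⟨h1, h2⟩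
      · refine Or.inl (Or.inl ⟨?_, ?_⟩)
        · rw [rot_eq_of h1, rotf_zero]
        · rw [rot_eq_of h2, rotf_zero]
      · refine Or.inl (Or.inr ⟨?_, ?_⟩)
        · rw [rot_eq_of h1, rotf_zero]
        · rw [rot_eq_of h2, rotf_zero]
    · obtain ⟨v, hv, h1, h2⟩ := hf
      refine Or.inr (Or.inl ⟨v, hv, ?_, ?_⟩)
      · rw [rot_eq_of h1, rotf_e2 hv]
      · rw [rot_eq_of h2, rotf_e2 (neg_ne hv)]
    · obtain ⟨y, hy, ⟨h1, h2⟩ | ⟨h1, h2⟩⟩ := hf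
      · refine Or.inr (Or.inr ⟨y, hy, Or.inl ⟨?_, ?_⟩⟩)
        · rw [rot_eq_of h1, rotf_e0 (two_ne_zero' hy), two_h]
        · rw [rot_eq_of h2, rotf_e1 hy]
      · refine Or.inr (Or.inr ⟨y, hy, Or.inr ⟨?_, ?_⟩⟩)
        · rw [rot_eq_of h1, rotf_e0 (two_ne_zero' hy), two_h]
        · rw [rot_eq_of h2, rotf_e1 hy]
  · rintro (hf | hf | hf)
    · rcases hf with ⟨h1, h2⟩ | ⟨h1, h2⟩
      · refine Or.inl (Or.inl ⟨?_, ?_⟩)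
        · rw [h1, rotinv_zero]
        · rw [h2, rotinv_zero]
      · refine Or.inl (Or.inr ⟨?_, ?_⟩)
        · rw [h1, rotinv_zero]
        · rw [h2, rotinv_zero]
    · obtain ⟨v, hv, rfl, rfl⟩ := hf
      refine Or.inr (Or.inl ⟨v, hv, ?_, ?_⟩)
      · rw [rotinv_e0 hv]
      · rw [rotinv_e0 (neg_ne hv)]
    · obtain ⟨y, hy, ⟨h1, h2⟩ | ⟨h1, h2⟩⟩ := hf
      · refine Or.inr (Or.inr ⟨y, hy, Or.inl ⟨?_, ?_⟩⟩)
        · rw [h1, rotinv_e1 hy]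
        · rw [h2, rotinv_e2 (two_ne_zero' hy), two_h]
      · refine Or.inr (Or.inr ⟨y, hy, Or.inr ⟨?_, ?_⟩⟩)
        · rw [h1, rotinv_e1 hy]
        · rw [h2, rotinv_e2 (two_ne_zero' hy), two_h]

lemma R2 {k : ℕ} (a b : Y k) :
    Fpred k (rotinv k (rotinv k a)) (rotinv k (rotinv k b)) ↔
      (isE0 k a b ∨ isRungL k 1 a b ∨ caE k a b) := by
  constructor
  · rintro (hf | hf | hf)
    · rcases hf with ⟨h1, h2⟩ | ⟨h1, h2⟩
      · refine Or.inl (Or.inl ⟨?_, ?_⟩)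
        · rw [rot2_eq_of h1, rotf_zero, rotf_zero]
        · rw [rot2_eq_of h2, rotf_zero, rotf_zero]
      · refine Or.inl (Or.inr ⟨?_, ?_⟩)
        · rw [rot2_eq_of h1, rotf_zero, rotf_zero]
        · rw [rot2_eq_of h2, rotf_zero, rotf_zero]
    · obtain ⟨v, hv, h1, h2⟩ := hf
      refine Or.inr (Or.inl ⟨v * h k, h_ne_zero hv, ?_, ?_⟩)
      · rw [rot2_eq_of h1, rotf_e2 hv, rotf_e0 hv]
      · rw [rot2_eq_of h2, rotf_e2 (neg_ne hv), rotf_e0 (neg_ne hv), neg_mul]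
    · obtain ⟨y, hy, ⟨h1, h2⟩ | ⟨h1, h2⟩⟩ := hf
      · refine Or.inr (Or.inr ⟨2*y, two_ne_zero' hy, Or.inr ⟨?_, ?_⟩⟩)
        · rw [rot2_eq_of h2, rotf_e1 hy, rotf_e2 (two_ne_zero' hy)]
        · rw [rot2_eq_of h1, rotf_e0 (two_ne_zero' hy), two_h, rotf_e1 hy]
      · refine Or.inr (Or.inr ⟨2*y, two_ne_zero' hy, Or.inl ⟨?_, ?_⟩⟩)
        · rw [rot2_eq_of h2, rotf_e1 hy, rotf_e2 (two_ne_zero' hy)]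
        · rw [rot2_eq_of h1, rotf_e0 (two_ne_zero' hy), two_h, rotf_e1 hy]
  · rintro (hf | hf | hf)
    · rcases hf with ⟨h1, h2⟩ | ⟨h1, h2⟩
      · refine Or.inl (Or.inl ⟨?_, ?_⟩)
        · rw [h1, rotinv_zero, rotinv_zero]
        · rw [h2, rotinv_zero, rotinv_zero]
      · refine Or.inl (Or.inr ⟨?_, ?_⟩)
        · rw [h1, rotinv_zero, rotinv_zero]
        · rw [h2, rotinv_zero, rotinv_zero]
    · obtain ⟨v, hv, rfl, rfl⟩ := hf
      refine Or.inr (Or.inl ⟨2*v, two_ne_zero' hv, ?_, ?_⟩)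
      · rw [rotinv_e1 hv, rotinv_e0 (two_ne_zero' hv)]
      · rw [rotinv_e1 (neg_ne hv), rotinv_e0 (two_ne_zero' (neg_ne hv)), mul_neg]
    · obtain ⟨v, hv, ⟨h1, h2⟩ | ⟨h1, h2⟩⟩ := hf
      · refine Or.inr (Or.inr ⟨v * h k, h_ne_zero hv, Or.inr ⟨?_, ?_⟩⟩)
        · rw [h2, rotinv_e2 hv, rotinv_e1 (h_ne_zero hv)]
        · rw [h1, rotinv_e0 hv, rotinv_e2 hv]
      · refine Or.inr (Or.inr ⟨v * h k, h_ne_zero hv, Or.inl ⟨?_, ?_⟩⟩)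
        · rw [h2, rotinv_e2 hv, rotinv_e1 (h_ne_zero hv)]
        · rw [h1, rotinv_e0 hv, rotinv_e2 hv]

lemma R3 {k : ℕ} {a b : Y k} (hab : a ≠ b) :
    isTedge k a b ↔ (isAB k a b ∨ bcE k a b ∨ caE k a b) := by
  constructor
  · rintro ⟨v, hv, ha, hb⟩
    obtain ⟨u, l⟩ := a
    obtain ⟨u', l'⟩ := b
    rw [mem_Tv] at ha hb
    have hmt : (2:R k)*(v * h k) = v := h_mul_two v
    rcases ha with ⟨hl, hu⟩ | ⟨hl, hu⟩ | ⟨hl, hu⟩ <;>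
      rcases hb with ⟨hl', hu'⟩ | ⟨hl', hu'⟩ | ⟨hl', hu'⟩
    · exact absurd (by rw [hl, hu, hl', hu'] : ((u,l) : Y k) = (u',l')) hab
    · exact Or.inl ⟨v * h k, h_ne_zero hv, Or.inl
        ⟨by rw [hl, hu, hmt], by rw [hl', hu']⟩⟩
    · exact Or.inr (Or.inr ⟨v, hv, Or.inl ⟨by rw [hl, hu], by rw [hl', hu']⟩⟩)
    · exact Or.inl ⟨v * h k, h_ne_zero hv, Or.inr
        ⟨by rw [hl', hu', hmt], by rw [hl, hu]⟩⟩
    · exact absurd (by rw [hl, hu, hl', hu'] : ((u,l) : Y k) = (u',l')) hab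
    · exact Or.inr (Or.inl ⟨v * h k, h_ne_zero hv, Or.inl
        ⟨by rw [hl, hu], by rw [hl', hu', hmt]⟩⟩)
    · exact Or.inr (Or.inr ⟨v, hv, Or.inr ⟨by rw [hl', hu'], by rw [hl, hu]⟩⟩)
    · exact Or.inr (Or.inl ⟨v * h k, h_ne_zero hv, Or.inr
        ⟨by rw [hl', hu'], by rw [hl, hu, hmt]⟩⟩)
    · exact absurd (by rw [hl, hu, hl', hu'] : ((u,l) : Y k) = (u',l')) hab
  · rintro (hf | hf | hf)
    · obtain ⟨y, hy, ⟨rfl, rfl⟩ | ⟨rfl, rfl⟩⟩ := hf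
      · refine ⟨2*y, two_ne_zero' hy, ?_, ?_⟩
        · rw [mem_Tv]; exact Or.inl ⟨rfl, rfl⟩
        · rw [mem_Tv]; exact Or.inr (Or.inl ⟨rfl, by rw [two_h]⟩)
      · refine ⟨2*y, two_ne_zero' hy, ?_, ?_⟩
        · rw [mem_Tv]; exact Or.inr (Or.inl ⟨rfl, by rw [two_h]⟩)
        · rw [mem_Tv]; exact Or.inl ⟨rfl, rfl⟩
    · obtain ⟨y, hy, ⟨rfl, rfl⟩ | ⟨rfl, rfl⟩⟩ := hf
      · refine ⟨2*y, two_ne_zero' hy, ?_, ?_⟩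
        · rw [mem_Tv]; exact Or.inr (Or.inl ⟨rfl, by rw [two_h]⟩)
        · rw [mem_Tv]; exact Or.inr (Or.inr ⟨rfl, rfl⟩)
      · refine ⟨2*y, two_ne_zero' hy, ?_, ?_⟩
        · rw [mem_Tv]; exact Or.inr (Or.inr ⟨rfl, rfl⟩)
        · rw [mem_Tv]; exact Or.inr (Or.inl ⟨rfl, by rw [two_h]⟩)
    · obtain ⟨v, hv, ⟨rfl, rfl⟩ | ⟨rfl, rfl⟩⟩ := hf
      · exact ⟨v, hv, by rw [mem_Tv]; exact Or.inl ⟨rfl, rfl⟩,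
          by rw [mem_Tv]; exact Or.inr (Or.inr ⟨rfl, rfl⟩)⟩
      · exact ⟨v, hv, by rw [mem_Tv]; exact Or.inr (Or.inr ⟨rfl, rfl⟩),
          by rw [mem_Tv]; exact Or.inl ⟨rfl, rfl⟩⟩

/-! ### Exclusivity -/

lemma lev_E {k : ℕ} {a b : Y k} (hf : isE0 k a b) :
    (a.2 = 1 ∧ b.2 = 2) ∨ (a.2 = 2 ∧ b.2 = 1) := by
  rcases hf with ⟨rfl, rfl⟩ | ⟨rfl, rfl⟩
  · exact Or.inl ⟨rfl, rfl⟩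
  · exact Or.inr ⟨rfl, rfl⟩

lemma lev_L {k : ℕ} {l : Fin 3} {a b : Y k} (hf : isRungL k l a b) : a.2 = l ∧ b.2 = l := by
  obtain ⟨v, hv, rfl, rfl⟩ := hf
  exact ⟨rfl, rfl⟩

lemma lev_AB {k : ℕ} {a b : Y k} (hf : isAB k a b) :
    (a.2 = 0 ∧ b.2 = 1) ∨ (a.2 = 1 ∧ b.2 = 0) := by
  obtain ⟨y, hy, ⟨rfl, rfl⟩ | ⟨rfl, rfl⟩⟩ := hf
  · exact Or.inl ⟨rfl, rfl⟩
  · exact Or.inr ⟨rfl, rfl⟩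

lemma lev_BC {k : ℕ} {a b : Y k} (hf : bcE k a b) :
    (a.2 = 1 ∧ b.2 = 2) ∨ (a.2 = 2 ∧ b.2 = 1) := by
  obtain ⟨y, hy, ⟨rfl, rfl⟩ | ⟨rfl, rfl⟩⟩ := hf
  · exact Or.inl ⟨rfl, rfl⟩
  · exact Or.inr ⟨rfl, rfl⟩

lemma lev_CA {k : ℕ} {a b : Y k} (hf : caE k a b) :
    (a.2 = 0 ∧ b.2 = 2) ∨ (a.2 = 2 ∧ b.2 = 0) := by
  obtain ⟨v, hv, ⟨rfl, rfl⟩ | ⟨rfl, rfl⟩⟩ := hf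
  · exact Or.inl ⟨rfl, rfl⟩
  · exact Or.inr ⟨rfl, rfl⟩

lemma lev_eq {k : ℕ} {a b : Y k} {p1 p2 q1 q2 : Fin 3}
    (h1 : a.2 = p1 ∧ b.2 = p2) (h2 : a.2 = q1 ∧ b.2 = q2) : p1 = q1 ∧ p2 = q2 :=
  ⟨h1.1.symm.trans h2.1, h1.2.symm.trans h2.2⟩

lemma ex_L_L {k : ℕ} {l l' : Fin 3} {a b : Y k} (hll' : l ≠ l')
    (h : isRungL k l a b) (h' : isRungL k l' a b) : False := by
  exact hll' (lev_eq (lev_L h) (lev_L h')).1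

lemma ex_L_AB {k : ℕ} {l : Fin 3} {a b : Y k} (h : isRungL k l a b) (h' : isAB k a b) : False := by
  rcases lev_AB h' with h2 | h2 <;>
    (obtain ⟨e1, e2⟩ := lev_eq (lev_L h) h2
     exact absurd (e1.symm.trans e2) (by decide))

lemma ex_L_BC {k : ℕ} {l : Fin 3} {a b : Y k} (h : isRungL k l a b) (h' : bcE k a b) : False := by
  rcases lev_BC h' with h2 | h2 <;>
    (obtain ⟨e1, e2⟩ := lev_eq (lev_L h) h2
     exact absurd (e1.symm.trans e2) (by decide))

lemma ex_L_CA {k : ℕ} {l : Fin 3} {a b : Y k} (h : isRungL k l a b) (h' : caE k a b) : False := by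
  rcases lev_CA h' with h2 | h2 <;>
    (obtain ⟨e1, e2⟩ := lev_eq (lev_L h) h2
     exact absurd (e1.symm.trans e2) (by decide))

lemma ex_AB_BC {k : ℕ} {a b : Y k} (h : isAB k a b) (h' : bcE k a b) : False := by
  rcases lev_AB h with h1 | h1 <;> rcases lev_BC h' with h2 | h2 <;>
    (obtain ⟨e1, e2⟩ := lev_eq h1 h2
     first
       | exact absurd e1 (by decide)
       | exact absurd e2 (by decide))

lemma ex_AB_CA {k : ℕ} {a b : Y k} (h : isAB k a b) (h' : caE k a b) : False := by
  rcases lev_AB h with h1 | h1 <;> rcases lev_CA h' with h2 | h2 <;>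
    (obtain ⟨e1, e2⟩ := lev_eq h1 h2
     first
       | exact absurd e1 (by decide)
       | exact absurd e2 (by decide))

lemma ex_BC_CA {k : ℕ} {a b : Y k} (h : bcE k a b) (h' : caE k a b) : False := by
  rcases lev_BC h with h1 | h1 <;> rcases lev_CA h' with h2 | h2 <;>
    (obtain ⟨e1, e2⟩ := lev_eq h1 h2
     first
       | exact absurd e1 (by decide)
       | exact absurd e2 (by decide))

lemma ex_E_AB {k : ℕ} {a b : Y k} (h : isE0 k a b) (h' : isAB k a b) : False := by
  rcases lev_E h with h1 | h1 <;> rcases lev_AB h' with h2 | h2 <;>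
    (obtain ⟨e1, e2⟩ := lev_eq h1 h2
     first
       | exact absurd e1 (by decide)
       | exact absurd e2 (by decide))

lemma ex_E_CA {k : ℕ} {a b : Y k} (h : isE0 k a b) (h' : caE k a b) : False := by
  rcases lev_E h with h1 | h1 <;> rcases lev_CA h' with h2 | h2 <;>
    (obtain ⟨e1, e2⟩ := lev_eq h1 h2
     first
       | exact absurd e1 (by decide)
       | exact absurd e2 (by decide))

lemma ex_E_BC {k : ℕ} {a b : Y k} (h : isE0 k a b) (h' : bcE k a b) : False := by
  obtain ⟨y, hy, hc⟩ := h'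
  rcases h with ⟨h1, h2⟩ | ⟨h1, h2⟩ <;> rcases hc with ⟨h3, h4⟩ | ⟨h3, h4⟩
  · rw [h1] at h3
    rw [Prod.mk.injEq] at h3
    exact hy h3.1.symm
  · rw [h2] at h3
    rw [Prod.mk.injEq] at h3
    exact absurd h3.2 (by decide)
  · rw [h1] at h3
    rw [Prod.mk.injEq] at h3
    exact absurd h3.2 (by decide)
  · rw [h2] at h3
    rw [Prod.mk.injEq] at h3
    exact hy h3.1.symm

/-! ### Classification -/

open Classical in
theorem codeg_classify {k : ℕ} (a b : Y k) (hab : a ≠ b) (haz : a ≠ z k) (hbz : b ≠ z k) :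
    cnt a b (H0 k) = if isE0 k a b then 0 else if isRung k a b then 2 else 3 := by
  rw [cnt_H0 a b hab haz hbz]
  simp only [R1 a b, R2 a b, R3 hab]
  by_cases hE : isE0 k a b
  · have hF : Fpred k a b := Or.inl hE
    have h4 : ¬ (isAB k a b ∨ bcE k a b ∨ caE k a b) := by
      rintro (hc | hc | hc)
      exacts [ex_E_AB hE hc, ex_E_BC hE hc, ex_E_CA hE hc]
    rw [if_pos hE, if_pos hF, if_pos (Or.inl hE), if_pos (Or.inl hE), if_neg h4]
  · rw [if_neg hE]
    by_cases h0 : isRungL k 0 a b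
    · have hr : isRung k a b := ⟨0, h0⟩
      have hF : ¬ Fpred k a b := by
        rintro (hc | hc | hc)
        exacts [hE hc, ex_L_L (by decide) h0 hc, ex_L_AB h0 hc]
      have h3 : ¬ (isE0 k a b ∨ isRungL k 1 a b ∨ caE k a b) := by
        rintro (hc | hc | hc)
        exacts [hE hc, ex_L_L (by decide) h0 hc, ex_L_CA h0 hc]
      have h4 : ¬ (isAB k a b ∨ bcE k a b ∨ caE k a b) := by
        rintro (hc | hc | hc)
        exacts [ex_L_AB h0 hc, ex_L_BC h0 hc, ex_L_CA h0 hc]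
      rw [if_pos hr, if_neg hF, if_pos (Or.inr (Or.inl h0)), if_neg h3, if_neg h4]
    · by_cases h1 : isRungL k 1 a b
      · have hr : isRung k a b := ⟨1, h1⟩
        have hF : ¬ Fpred k a b := by
          rintro (hc | hc | hc)
          exacts [hE hc, ex_L_L (by decide) h1 hc, ex_L_AB h1 hc]
        have hs : ¬ (isE0 k a b ∨ isRungL k 0 a b ∨ bcE k a b) := by
          rintro (hc | hc | hc)
          exacts [hE hc, h0 hc, ex_L_BC h1 hc]
        have h4 : ¬ (isAB k a b ∨ bcE k a b ∨ caE k a b) := by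
          rintro (hc | hc | hc)
          exacts [ex_L_AB h1 hc, ex_L_BC h1 hc, ex_L_CA h1 hc]
        rw [if_pos hr, if_neg hF, if_neg hs, if_pos (Or.inr (Or.inl h1)), if_neg h4]
      · by_cases h2 : isRungL k 2 a b
        · have hr : isRung k a b := ⟨2, h2⟩
          have hF : Fpred k a b := Or.inr (Or.inl h2)
          have hs : ¬ (isE0 k a b ∨ isRungL k 0 a b ∨ bcE k a b) := by
            rintro (hc | hc | hc)
            exacts [hE hc, h0 hc, ex_L_BC h2 hc]
          have h3 : ¬ (isE0 k a b ∨ isRungL k 1 a b ∨ caE k a b) := by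
            rintro (hc | hc | hc)
            exacts [hE hc, h1 hc, ex_L_CA h2 hc]
          have h4 : ¬ (isAB k a b ∨ bcE k a b ∨ caE k a b) := by
            rintro (hc | hc | hc)
            exacts [ex_L_AB h2 hc, ex_L_BC h2 hc, ex_L_CA h2 hc]
          rw [if_pos hr, if_pos hF, if_neg hs, if_neg h3, if_neg h4]
        · have hnr : ¬ isRung k a b := by
            rintro ⟨l, hl⟩
            rcases fin3_all l with rfl | rfl | rfl
            exacts [h0 hl, h1 hl, h2 hl]
          rw [if_neg hnr]
          by_cases hAB : isAB k a b
          · have hF : Fpred k a b := Or.inr (Or.inr hAB)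
            have hs : ¬ (isE0 k a b ∨ isRungL k 0 a b ∨ bcE k a b) := by
              rintro (hc | hc | hc)
              exacts [hE hc, h0 hc, ex_AB_BC hAB hc]
            have h3 : ¬ (isE0 k a b ∨ isRungL k 1 a b ∨ caE k a b) := by
              rintro (hc | hc | hc)
              exacts [hE hc, h1 hc, ex_AB_CA hAB hc]
            rw [if_pos hF, if_neg hs, if_neg h3, if_pos (Or.inl hAB)]
          · by_cases hBC : bcE k a b
            · have hF : ¬ Fpred k a b := by
                rintro (hc | hc | hc)
                exacts [hE hc, h2 hc, hAB hc]
              have h3 : ¬ (isE0 k a b ∨ isRungL k 1 a b ∨ caE k a b) := by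
                rintro (hc | hc | hc)
                exacts [hE hc, h1 hc, ex_BC_CA hBC hc]
              rw [if_neg hF, if_pos (Or.inr (Or.inr hBC)), if_neg h3,
                if_pos (Or.inr (Or.inl hBC))]
            · by_cases hCA : caE k a b
              · have hF : ¬ Fpred k a b := by
                  rintro (hc | hc | hc)
                  exacts [hE hc, h2 hc, hAB hc]
                have hs : ¬ (isE0 k a b ∨ isRungL k 0 a b ∨ bcE k a b) := by
                  rintro (hc | hc | hc)
                  exacts [hE hc, h0 hc, hBC hc]
                rw [if_neg hF, if_neg hs, if_pos (Or.inr (Or.inr hCA)),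
                  if_pos (Or.inr (Or.inr hCA))]
              · have hF : ¬ Fpred k a b := by
                  rintro (hc | hc | hc)
                  exacts [hE hc, h2 hc, hAB hc]
                have hs : ¬ (isE0 k a b ∨ isRungL k 0 a b ∨ bcE k a b) := by
                  rintro (hc | hc | hc)
                  exacts [hE hc, h0 hc, hBC hc]
                have h3 : ¬ (isE0 k a b ∨ isRungL k 1 a b ∨ caE k a b) := by
                  rintro (hc | hc | hc)
                  exacts [hE hc, h1 hc, hCA hc]
                have h4 : ¬ (isAB k a b ∨ bcE k a b ∨ caE k a b) := by
                  rintro (hc | hc | hc)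
                  exacts [hAB hc, hBC hc, hCA hc]
                rw [if_neg hF, if_neg hs, if_neg h3, if_neg h4]

/-! ### Block sizes and z-freeness -/

lemma card_Vk {k : ℕ} (x : R k) : (Vk k x).card = 3 := by
  rw [Vk]
  rw [Finset.card_insert_of_notMem (by simp [Prod.ext_iff]),
    Finset.card_insert_of_notMem (by simp [Prod.ext_iff]), Finset.card_singleton]

lemma card_Lat {k : ℕ} {w d : R k} {i : Fin 3} (hd : d ≠ 0) : (Lat k w d i).card = 3 := by
  have h2d : w + d ≠ w - d := by
    intro hc
    exact two_ne_zero' hd (by linear_combination hc)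
  have hii : i + 1 ≠ i := fin3_succ_ne i
  rw [Lat]
  rw [Finset.card_insert_of_notMem, Finset.card_insert_of_notMem, Finset.card_singleton]
  · simp only [Finset.mem_singleton, Prod.mk.injEq, not_and]
    intro _
    exact hii.symm
  · simp only [Finset.mem_insert, Finset.mem_singleton, Prod.mk.injEq, not_or, not_and]
    constructor
    · intro hc
      exact absurd hc h2d
    · intro _
      exact hii.symm

lemma card_Tv {k : ℕ} (v : R k) : (Tv k v).card = 3 := by
  rw [Tv]
  rw [Finset.card_insert_of_notMem (by simp [Prod.ext_iff]),
    Finset.card_insert_of_notMem (by simp [Prod.ext_iff]), Finset.card_singleton]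

lemma mem_D_elim {k : ℕ} {t : Finset (Y k)} (ht : t ∈ D k) : t.card = 3 ∧ z k ∉ t := by
  rw [D, Multiset.mem_add] at ht
  rcases ht with ht | ht
  · obtain ⟨x, hx, rfl⟩ := Multiset.mem_map.mp ht
    have hx0 : x ≠ 0 := (Finset.mem_erase.mp (show x ∈ (univ : Finset (R k)).erase 0 from Finset.mem_val.mp hx)).1
    refine ⟨card_Vk x, ?_⟩
    rw [mem_Vk]
    exact fun hc => hx0 hc.symm
  · obtain ⟨p, hp, rfl⟩ := Multiset.mem_map.mp ht
    obtain ⟨hdp, hz⟩ := mem_PLD.mp hp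
    have hd0 : p.2.1 ≠ 0 := by
      intro hc
      have := (mem_posd.mp hdp).1
      rw [hc] at this
      simp at this
    exact ⟨card_Lat hd0, hz⟩

lemma mem_H0_elim {k : ℕ} {t : Finset (Y k)} (ht : t ∈ H0 k) : t.card = 3 ∧ z k ∉ t := by
  rw [H0, Multiset.mem_add, Multiset.mem_add, Multiset.mem_add] at ht
  have himg : ∀ s : Finset (Y k), s.card = 3 ∧ z k ∉ s →
      (s.image (rotf k)).card = 3 ∧ z k ∉ s.image (rotf k) := by
    rintro s ⟨h1, h2⟩
    constructor
    · rw [Finset.card_image_of_injective _ rotf_inj, h1]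
    · rw [mem_image_rotf, rotinv_z]
      exact h2
  rcases ht with ((ht | ht) | ht) | ht
  · exact mem_D_elim ht
  · obtain ⟨s, hs, rfl⟩ := Multiset.mem_map.mp ht
    exact himg s (mem_D_elim hs)
  · obtain ⟨s', hs', rfl⟩ := Multiset.mem_map.mp ht
    obtain ⟨s, hs, rfl⟩ := Multiset.mem_map.mp hs'
    exact himg _ (himg s (mem_D_elim hs))
  · obtain ⟨v, hv, rfl⟩ := Multiset.mem_map.mp ht
    have hv0 : v ≠ 0 := by
      have := Finset.mem_erase.mp (Finset.mem_val.mp hv)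
      exact this.1
    refine ⟨card_Tv v, ?_⟩
    show ((0,0) : Y k) ∉ _
    rw [mem_Tv]
    rintro (⟨-, hc⟩ | ⟨hc, -⟩ | ⟨hc, -⟩)
    · exact hv0 hc.symm
    · exact absurd hc (by decide)
    · exact absurd hc (by decide)

/-! ### Cardinalities -/

lemma card_PV {k : ℕ} : (PV k).card = 2*k := by
  rw [PV, Finset.card_erase_of_mem (Finset.mem_univ _), Finset.card_univ, ZMod.card]
  rfl

noncomputable def badset (k : ℕ) : Finset (R k × R k × Fin 3) :=
  (univ ×ˢ posd k ×ˢ univ).filter (fun p => z k ∈ Lat k p.1 p.2.1 p.2.2)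

lemma badset_eq {k : ℕ} : badset k =
    ((posd k).image (fun d => (d, d, (0:Fin 3)))) ∪
    ((posd k).image (fun d => (-d, d, (0:Fin 3)))) ∪
    ((posd k).image (fun d => ((0:R k), d, (2:Fin 3)))) := by
  apply Finset.ext
  rintro ⟨w, d, i⟩
  rw [badset, Finset.mem_filter]
  simp only [Finset.mem_union, Finset.mem_image, Finset.mem_product, Finset.mem_univ,
    true_and, and_true, Prod.mk.injEq]
  constructor
  · rintro ⟨hdp, hz⟩
    rw [zmem_Lat] at hz
    rcases hz with ⟨rfl, hor | hor⟩ | ⟨rfl, rfl⟩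
    · exact Or.inl (Or.inr ⟨d, hdp, by linear_combination -hor, rfl, rfl⟩)
    · exact Or.inl (Or.inl ⟨d, hdp, by linear_combination -hor, rfl, rfl⟩)
    · exact Or.inr ⟨d, hdp, rfl, rfl, rfl⟩
  · rintro ((⟨d', hd', rfl, rfl, rfl⟩ | ⟨d', hd', rfl, rfl, rfl⟩) | ⟨d', hd', rfl, rfl, rfl⟩)
    · exact ⟨hd', by rw [zmem_Lat]; exact Or.inl ⟨rfl, Or.inr (by ring)⟩⟩
    · exact ⟨hd', by rw [zmem_Lat]; exact Or.inl ⟨rfl, Or.inl (by ring)⟩⟩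
    · exact ⟨hd', by rw [zmem_Lat]; exact Or.inr ⟨rfl, rfl⟩⟩

lemma posd_nonzero {k : ℕ} {d : R k} (hd : d ∈ posd k) : d ≠ 0 := by
  intro hc
  have := (mem_posd.mp hd).1
  rw [hc] at this
  simp at this

lemma card_badset {k : ℕ} : (badset k).card = 3*k := by
  rw [badset_eq]
  have hinj1 : Set.InjOn (fun d : R k => (d, d, (0:Fin 3))) (posd k) := by
    intro a _ b _ hab
    rw [Prod.mk.injEq, Prod.mk.injEq] at hab
    exact hab.1
  have hinj2 : Set.InjOn (fun d : R k => (-d, d, (0:Fin 3))) (posd k) := by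
    intro a _ b _ hab
    rw [Prod.mk.injEq, Prod.mk.injEq] at hab
    exact hab.2.1
  have hinj3 : Set.InjOn (fun d : R k => ((0:R k), d, (2:Fin 3))) (posd k) := by
    intro a _ b _ hab
    rw [Prod.mk.injEq, Prod.mk.injEq] at hab
    exact hab.2.1
  have hd12 : Disjoint ((posd k).image (fun d => (d, d, (0:Fin 3))))
      ((posd k).image (fun d => (-d, d, (0:Fin 3)))) := by
    rw [Finset.disjoint_left]
    rintro p hp1 hp2
    obtain ⟨a, ha, rfl⟩ := Finset.mem_image.mp hp1
    obtain ⟨b, hb, hc⟩ := Finset.mem_image.mp hp2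
    rw [Prod.mk.injEq, Prod.mk.injEq] at hc
    obtain ⟨h1, h2, -⟩ := hc
    rw [h2] at h1
    exact two_ne_zero' (posd_nonzero ha) (by linear_combination -h1)
  have hd3 : Disjoint (((posd k).image (fun d => (d, d, (0:Fin 3)))) ∪
      ((posd k).image (fun d => (-d, d, (0:Fin 3)))))
      ((posd k).image (fun d => ((0:R k), d, (2:Fin 3)))) := by
    rw [Finset.disjoint_left]
    rintro p hp1 hp2
    obtain ⟨b, hb, rfl⟩ := Finset.mem_image.mp hp2
    rw [Finset.mem_union] at hp1
    rcases hp1 with hp1 | hp1 <;>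
      (obtain ⟨a, ha, hc⟩ := Finset.mem_image.mp hp1
       rw [Prod.mk.injEq, Prod.mk.injEq] at hc
       exact absurd hc.2.2 (by decide))
  rw [Finset.card_union_of_disjoint hd3, Finset.card_union_of_disjoint hd12,
    Finset.card_image_of_injOn hinj1, Finset.card_image_of_injOn hinj2,
    Finset.card_image_of_injOn hinj3, card_posd]
  ring

lemma card_PLD {k : ℕ} : (PLD k).card = 6*(k*k) := by
  have hsplit := Finset.card_filter_add_card_filter_not
    (s := (univ : Finset (R k)) ×ˢ posd k ×ˢ (univ : Finset (Fin 3)))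
    (p := fun p => z k ∈ Lat k p.1 p.2.1 p.2.2)
  have htot : ((univ : Finset (R k)) ×ˢ posd k ×ˢ (univ : Finset (Fin 3))).card = 6*(k*k)+3*k := by
    rw [Finset.card_product, Finset.card_product, Finset.card_univ, Finset.card_univ,
      ZMod.card, card_posd]
    show (2*k+1)*(k*3) = _
    ring
  have hbad : (badset k).card = 3*k := card_badset
  rw [badset] at hbad
  have hpld : (PLD k).card =
      (((univ : Finset (R k)) ×ˢ posd k ×ˢ (univ : Finset (Fin 3))).filter
        (fun p => ¬ z k ∈ Lat k p.1 p.2.1 p.2.2)).card := rfl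
  rw [hpld]
  omega

lemma card_D {k : ℕ} : Multiset.card (D k) = 6*(k*k) + 2*k := by
  rw [D, Multiset.card_add, Multiset.card_map, Multiset.card_map]
  have h1 : Multiset.card (PV k).val = 2*k := card_PV
  have h2 : Multiset.card (PLD k).val = 6*(k*k) := card_PLD
  omega

lemma card_H0 {k : ℕ} : Multiset.card (H0 k) = 18*(k*k) + 8*k := by
  rw [H0, Multiset.card_add, Multiset.card_add, Multiset.card_add, Multiset.card_map,
    Multiset.card_map, Multiset.card_map, Ttri, Multiset.card_map]
  have h1 := card_D (k := k)
  have h2 : Multiset.card (univ.erase (0 : R k)).val = 2*k := card_PV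
  omega

/-! ### The matching P0 -/

noncomputable def e0 (k : ℕ) : Finset (Y k) := {((0:R k),(1:Fin 3)), ((0:R k),(2:Fin 3))}

noncomputable def P0 (k : ℕ) : Finset (Finset (Y k)) :=
  insert (e0 k) ((posd k ×ˢ (univ : Finset (Fin 3))).image (fun p => {(p.1, p.2), (-p.1, p.2)}))

lemma pair_eq_elim {α : Type*} [DecidableEq α] {a b c d : α} (hcd : c ≠ d)
    (h : ({a,b} : Finset α) = {c,d}) : (a = c ∧ b = d) ∨ (a = d ∧ b = c) := by
  have ha : a ∈ ({c,d} : Finset α) := by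
    rw [← h]; exact Finset.mem_insert_self _ _
  have hb : b ∈ ({c,d} : Finset α) := by
    rw [← h]; exact Finset.mem_insert_of_mem (Finset.mem_singleton_self _)
  have hd : d ∈ ({a,b} : Finset α) := by
    rw [h]; exact Finset.mem_insert_of_mem (Finset.mem_singleton_self _)
  have hc : c ∈ ({a,b} : Finset α) := by
    rw [h]; exact Finset.mem_insert_self _ _
  simp only [Finset.mem_insert, Finset.mem_singleton] at ha hb hc hd
  rcases ha with rfl | rfl
  · left
    refine ⟨rfl, ?_⟩
    rcases hb with rfl | rfl
    · rcases hd with hd | hd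
      · exact absurd hd.symm hcd
      · exact absurd hd.symm hcd
    · rfl
  · right
    refine ⟨rfl, ?_⟩
    rcases hb with rfl | rfl
    · rfl
    · rcases hc with hc | hc
      · exact absurd hc hcd
      · exact absurd hc hcd

lemma e0_pts_ne {k : ℕ} : (((0:R k),(1:Fin 3)) : Y k) ≠ ((0:R k),(2:Fin 3)) := by
  intro hc
  rw [Prod.mk.injEq] at hc
  exact absurd hc.2 (by decide)

lemma rung_pts_ne {k : ℕ} {v : R k} (hv : v ≠ 0) (l : Fin 3) :
    ((v,l) : Y k) ≠ (-v,l) := by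
  intro hc
  rw [Prod.mk.injEq] at hc
  exact two_ne_zero' hv (by linear_combination hc.1)

lemma mem_P0_iff {k : ℕ} {a b : Y k} (hab : a ≠ b) :
    ({a,b} : Finset (Y k)) ∈ P0 k ↔ (isE0 k a b ∨ isRung k a b) := by
  constructor
  · intro hm
    rw [P0, Finset.mem_insert] at hm
    rcases hm with hm | hm
    · rcases pair_eq_elim e0_pts_ne hm with ⟨h1, h2⟩ | ⟨h1, h2⟩
      · exact Or.inl (Or.inl ⟨h1, h2⟩)
      · exact Or.inl (Or.inr ⟨h1, h2⟩)
    · obtain ⟨⟨v, l⟩, hvl, hq⟩ := Finset.mem_image.mp hm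
      have hv0 : v ≠ 0 := posd_nonzero (Finset.mem_product.mp hvl).1
      rcases pair_eq_elim (rung_pts_ne hv0 l) hq.symm with ⟨h1, h2⟩ | ⟨h1, h2⟩
      · exact Or.inr ⟨l, v, hv0, h1, h2⟩
      · exact Or.inr ⟨l, -v, neg_ne hv0, h1, by rw [neg_neg]; exact h2⟩
  · rintro (hf | hf)
    · rcases hf with ⟨rfl, rfl⟩ | ⟨rfl, rfl⟩
      · exact Finset.mem_insert_self _ _
      · rw [P0]
        rw [show ({((0:R k),(2:Fin 3)), ((0:R k),(1:Fin 3))} : Finset (Y k)) = e0 k from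
          Finset.pair_comm _ _]
        exact Finset.mem_insert_self _ _
    · obtain ⟨l, v, hv, rfl, rfl⟩ := hf
      rw [P0, Finset.mem_insert]
      right
      rcases posd_sign (k := k) hv with ⟨h1, -⟩ | ⟨-, h1⟩
      · exact Finset.mem_image.mpr ⟨(v, l), Finset.mem_product.mpr ⟨h1, Finset.mem_univ _⟩, rfl⟩
      · refine Finset.mem_image.mpr ⟨(-v, l), Finset.mem_product.mpr ⟨h1, Finset.mem_univ _⟩, ?_⟩
        dsimp only
        rw [neg_neg, Finset.pair_comm]

lemma P0_elim {k : ℕ} {p : Finset (Y k)} (hp : p ∈ P0 k) :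
    p = e0 k ∨ ∃ v : R k, ∃ l : Fin 3, v ≠ 0 ∧ p = {(v,l), (-v,l)} := by
  rw [P0, Finset.mem_insert] at hp
  rcases hp with rfl | hp
  · exact Or.inl rfl
  · obtain ⟨⟨v, l⟩, hvl, hq⟩ := Finset.mem_image.mp hp
    exact Or.inr ⟨v, l, posd_nonzero (Finset.mem_product.mp hvl).1, hq.symm⟩

lemma P0_card2 {k : ℕ} : ∀ p ∈ P0 k, p.card = 2 := by
  intro p hp
  rcases P0_elim hp with rfl | ⟨v, l, hv, rfl⟩
  · rw [e0, Finset.card_insert_of_notMem (by simpa using e0_pts_ne), Finset.card_singleton]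
  · rw [Finset.card_insert_of_notMem (by simpa using rung_pts_ne hv l), Finset.card_singleton]

lemma P0_zfree {k : ℕ} : ∀ p ∈ P0 k, z k ∉ p := by
  intro p hp
  rcases P0_elim hp with rfl | ⟨v, l, hv, rfl⟩
  · rw [e0]
    intro hc
    simp only [Finset.mem_insert, Finset.mem_singleton] at hc
    rcases hc with hc | hc <;>
      (rw [z, Prod.mk.injEq] at hc
       exact absurd hc.2 (by decide))
  · intro hc
    simp only [Finset.mem_insert, Finset.mem_singleton] at hc
    rcases hc with hc | hc <;>
      (rw [z, Prod.mk.injEq] at hc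
       first
         | exact hv hc.1.symm
         | exact neg_ne hv hc.1.symm)

lemma P0_mem_elem {k : ℕ} {p : Finset (Y k)} (hp : p ∈ P0 k) {a : Y k} (ha : a ∈ p) :
    ∀ q ∈ P0 k, a ∈ q → p = q := by
  intro q hq haq
  rcases P0_elim hp with rfl | ⟨v, l, hv, rfl⟩ <;>
    rcases P0_elim hq with rfl | ⟨v', l', hv', rfl⟩
  · rfl
  · exfalso
    simp only [e0, Finset.mem_insert, Finset.mem_singleton] at ha haq
    rcases ha with rfl | rfl <;> rcases haq with hc | hc <;>
      (rw [Prod.mk.injEq] at hc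
       first
         | exact hv' hc.1.symm
         | exact neg_ne hv' hc.1.symm)
  · exfalso
    simp only [e0, Finset.mem_insert, Finset.mem_singleton] at ha haq
    rcases haq with rfl | rfl <;> rcases ha with hc | hc <;>
      (rw [Prod.mk.injEq] at hc
       first
         | exact hv hc.1.symm
         | exact neg_ne hv hc.1.symm)
  · simp only [Finset.mem_insert, Finset.mem_singleton] at ha haq
    have hll : l = l' ∧ (v = v' ∨ v = -v') := by
      rcases ha with hc | hc <;> rcases haq with hc' | hc' <;>
        rw [Prod.ext_iff] at hc hc' <;> refine ⟨hc.2.symm.trans hc'.2, ?_⟩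
      · exact Or.inl ((hc.1.symm.trans hc'.1 : v = v'))
      · exact Or.inr ((hc.1.symm.trans hc'.1 : v = -v'))
      · exact Or.inr (by linear_combination -(hc.1.symm.trans hc'.1 : -v = v'))
      · exact Or.inl (by linear_combination -(hc.1.symm.trans hc'.1 : -v = -v'))
    obtain ⟨rfl, hvv⟩ := hll
    rcases hvv with rfl | rfl
    · rfl
    · rw [neg_neg, Finset.pair_comm]

lemma P0_disjoint {k : ℕ} : ∀ p ∈ P0 k, ∀ q ∈ P0 k, p ≠ q → Disjoint p q := by
  intro p hp q hq hpq
  rw [Finset.disjoint_left]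
  intro a hap haq
  exact hpq (P0_mem_elem hp hap q hq haq)

lemma P0_cover {k : ℕ} {a : Y k} (ha : a ≠ z k) : ∃ p ∈ P0 k, a ∈ p := by
  obtain ⟨u, l⟩ := a
  rcases eq_or_ne u 0 with rfl | hu
  · have hl : l ≠ 0 := by
      intro hc
      exact ha (by rw [hc]; rfl)
    refine ⟨e0 k, Finset.mem_insert_self _ _, ?_⟩
    rcases fin3_all l with rfl | rfl | rfl
    · exact absurd rfl hl
    · exact Finset.mem_insert_self _ _
    · exact Finset.mem_insert_of_mem (Finset.mem_singleton_self _)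
  · refine ⟨{(u,l), (-u,l)}, ?_, Finset.mem_insert_self _ _⟩
    exact (mem_P0_iff (rung_pts_ne hu l)).mpr (Or.inr ⟨l, u, hu, rfl, rfl⟩)

lemma card_P0 {k : ℕ} : (P0 k).card = 3*k+1 := by
  rw [P0, Finset.card_insert_of_notMem, Finset.card_image_of_injOn, Finset.card_product,
    card_posd, Finset.card_univ]
  · rw [Fintype.card_fin]
    ring
  · rintro ⟨v, l⟩ hvl ⟨v', l'⟩ hvl' hq
    simp only [Finset.mem_coe, Finset.mem_product] at hvl hvl'
    have hv0 : v ≠ 0 := posd_nonzero hvl.1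
    have hv0' : v' ≠ 0 := posd_nonzero hvl'.1
    rcases pair_eq_elim (rung_pts_ne hv0' l') hq with ⟨h1, h2⟩ | ⟨h1, h2⟩
    · rw [Prod.mk.injEq] at h1
      rw [Prod.mk.injEq]
      exact ⟨h1.1, h1.2⟩
    · rw [Prod.mk.injEq] at h1
      exfalso
      rcases posd_sign (k := k) hv0' with ⟨hh1, hh2⟩ | ⟨hh1, hh2⟩
      · apply hh2
        rw [← h1.1]
        exact hvl.1
      · exact hh1 hvl'.1
  · intro hm
    obtain ⟨⟨v, l⟩, hvl, hq⟩ := Finset.mem_image.mp hm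
    have hv0 : v ≠ 0 := posd_nonzero (Finset.mem_product.mp hvl).1
    rcases pair_eq_elim e0_pts_ne hq with ⟨h1, -⟩ | ⟨h1, -⟩ <;>
      (rw [Prod.mk.injEq] at h1
       exact hv0 h1.1)

end Stmt13

open Stmt13 Finset in
theorem stmt_13' (ν : ℕ) (hpos : 0 < ν) (hmod : ν % 6 = 2) :
    ∃ H : Multiset (Finset (Fin ν)),
      (∀ t ∈ H, t.card = 3) ∧
      (∀ x y : Fin ν, x ≠ y → codegPair H {x, y} ≤ 3) ∧
      Multiset.card H = (3 * ν.choose 2 - ν / 2 - 2) / 3 ∧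
      ∃ P : Finset (Finset (Fin ν)),
        P.card = ν / 2 ∧
        (∀ p ∈ P, p.card = 2) ∧
        (∀ p ∈ P, ∀ q ∈ P, p ≠ q → Disjoint p q) ∧
        (∀ v : Fin ν, ∃ p ∈ P, v ∈ p) ∧
        (∃ p₀ ∈ P, codegPair H p₀ = 0 ∧
          ∀ p ∈ P, p ≠ p₀ → codegPair H p = 2) ∧
        (∀ x y : Fin ν, x ≠ y → ({x, y} : Finset (Fin ν)) ∉ P →
          codegPair H {x, y} = 3) := by
  classical
  obtain ⟨k, rfl⟩ : ∃ k, ν = 6*k+2 := ⟨ν/6, by omega⟩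
  have hcardY : Fintype.card (Y k) = 6*k+3 := by
    rw [Fintype.card_prod, ZMod.card, Fintype.card_fin]
    show (2*k+1)*3 = _
    ring
  have hcardV : Fintype.card {y : Y k // y ≠ z k} = 6*k+2 := by
    have h1 : Fintype.card {y : Y k // ¬ y = z k} =
        Fintype.card (Y k) - Fintype.card {y : Y k // y = z k} :=
      Fintype.card_subtype_compl _
    have h2 : Fintype.card {y : Y k // y = z k} = 1 := Fintype.card_subtype_eq _
    have h3 : Fintype.card {y : Y k // y ≠ z k} = Fintype.card {y : Y k // ¬ y = z k} := rfl
    omega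
  let e : {y : Y k // y ≠ z k} ≃ Fin (6*k+2) := Fintype.equivFinOfCardEq hcardV
  let ψ : Y k → Fin (6*k+2) := fun y =>
    if hy : y ≠ z k then e ⟨y, hy⟩ else (⟨0, by omega⟩ : Fin (6*k+2))
  let φ : Fin (6*k+2) → Y k := fun x => (e.symm x).val
  have hφz : ∀ x, φ x ≠ z k := fun x => (e.symm x).2
  have hψφ : ∀ x, ψ (φ x) = x := by
    intro x
    have h2 : φ x ≠ z k := hφz x
    show (if hy : φ x ≠ z k then e ⟨φ x, hy⟩ else _) = x
    rw [dif_pos h2]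
    show e ⟨(e.symm x).val, _⟩ = x
    rw [Subtype.coe_eta, Equiv.apply_symm_apply]
  have hφinj : Function.Injective φ := by
    intro x y hxy
    have := Subtype.ext hxy
    exact e.symm.injective this
  have hψinj : ∀ u v : Y k, u ≠ z k → v ≠ z k → ψ u = ψ v → u = v := by
    intro u v hu hv huv
    simp only [ψ, dif_pos hu, dif_pos hv] at huv
    have := e.injective huv
    exact congrArg Subtype.val this
  have hφψ : ∀ u : Y k, u ≠ z k → φ (ψ u) = u := by
    intro u hu
    simp only [ψ, dif_pos hu]
    show (e.symm (e ⟨u, hu⟩)).val = u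
    rw [Equiv.symm_apply_apply]
  -- transport lemmas
  have hzfreeH : ∀ t ∈ H0 k, ∀ u ∈ t, u ≠ z k :=
    fun t ht u hu hc => (mem_H0_elim ht).2 (hc ▸ hu)
  have hpair : ∀ a b : Y k, a ≠ z k → b ≠ z k →
      codegPair ((H0 k).map (Finset.image ψ)) {ψ a, ψ b} = cnt a b (H0 k) := by
    intro a b ha hb
    show Multiset.card (Multiset.filter _ (Multiset.map _ _)) = _
    rw [← Multiset.countP_eq_card_filter, Multiset.countP_map, cnt,
      Multiset.countP_eq_card_filter]
    apply congrArg
    apply Multiset.filter_congr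
    intro t ht
    rw [Finset.insert_subset_iff, Finset.singleton_subset_iff]
    constructor
    · rintro ⟨h1, h2⟩
      obtain ⟨u, hu, hue⟩ := Finset.mem_image.mp h1
      obtain ⟨v, hv, hve⟩ := Finset.mem_image.mp h2
      rw [hψinj u a (hzfreeH t ht u hu) ha hue] at hu
      rw [hψinj v b (hzfreeH t ht v hv) hb hve] at hv
      exact ⟨hu, hv⟩
    · rintro ⟨h1, h2⟩
      exact ⟨Finset.mem_image_of_mem ψ h1, Finset.mem_image_of_mem ψ h2⟩
  have hcode : ∀ x y : Fin (6*k+2), x ≠ y →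
      codegPair ((H0 k).map (Finset.image ψ)) {x, y} =
        if isE0 k (φ x) (φ y) then 0 else if isRung k (φ x) (φ y) then 2 else 3 := by
    intro x y hxy
    have hxy' : φ x ≠ φ y := fun hc => hxy (hφinj hc)
    have hsub : ({x, y} : Finset (Fin (6*k+2))) = {ψ (φ x), ψ (φ y)} := by
      rw [hψφ, hψφ]
    rw [hsub, hpair _ _ (hφz x) (hφz y), codeg_classify _ _ hxy' (hφz x) (hφz y)]
  have himgP : ∀ p ∈ P0 k, Finset.image φ (Finset.image ψ p) = p := by
    intro p hp
    rw [Finset.image_image]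
    have heq : ∀ u ∈ p, (φ ∘ ψ) u = u := by
      intro u hu
      exact hφψ u (fun hc => P0_zfree p hp (hc ▸ hu))
    calc p.image (φ ∘ ψ) = p.image id := Finset.image_congr heq
    _ = p := Finset.image_id
  have he0P0 : e0 k ∈ P0 k := by
    rw [P0]
    exact Finset.mem_insert_self _ _
  have hz01 : (((0:R k),(1:Fin 3)) : Y k) ≠ z k := by
    rw [ne_z_iff]
    rintro ⟨-, hc⟩
    exact absurd hc (by decide)
  have hz02 : (((0:R k),(2:Fin 3)) : Y k) ≠ z k := by
    rw [ne_z_iff]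
    rintro ⟨-, hc⟩
    exact absurd hc (by decide)
  have hzrung : ∀ (v : R k) (l : Fin 3), v ≠ 0 → (((v,l)) : Y k) ≠ z k := by
    intro v l hv
    rw [ne_z_iff]
    rintro ⟨hc, -⟩
    exact hv hc
  -- the design and matching
  refine ⟨(H0 k).map (Finset.image ψ), ?_, ?_, ?_,
    (P0 k).image (Finset.image ψ), ?_, ?_, ?_, ?_, ?_, ?_⟩
  · -- block sizes
    intro t ht
    obtain ⟨t0, ht0, rfl⟩ := Multiset.mem_map.mp ht
    obtain ⟨hc3, hzf⟩ := mem_H0_elim ht0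
    rw [Finset.card_image_of_injOn, hc3]
    intro u hu v hv huv
    exact hψinj u v (fun hc => hzf (hc ▸ hu)) (fun hc => hzf (hc ▸ hv)) huv
  · -- codegree bound
    intro x y hxy
    rw [hcode x y hxy]
    split_ifs <;> omega
  · -- cardinality
    rw [Multiset.card_map, card_H0]
    have hch : (6*k+2).choose 2 = 18*(k*k)+9*k+1 := by
      rw [Nat.choose_two_right]
      have h0 : 6*k+2-1 = 6*k+1 := by omega
      rw [h0]
      have h1 : (6*k+2)*(6*k+1) = 2*(18*(k*k)+9*k+1) := by ring
      rw [h1, Nat.mul_div_cancel_left _ (by norm_num)]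
    rw [hch]
    omega
  · -- card P
    rw [Finset.card_image_of_injOn, card_P0]
    · omega
    · intro p hp q hq hpq
      rw [Finset.mem_coe] at hp hq
      rw [← himgP p hp, ← himgP q hq, hpq]
  · -- elements have card 2
    intro p hp
    obtain ⟨p0, hp0, rfl⟩ := Finset.mem_image.mp hp
    rw [Finset.card_image_of_injOn, P0_card2 p0 hp0]
    intro u hu v hv huv
    exact hψinj u v (fun hc => P0_zfree p0 hp0 (hc ▸ hu))
      (fun hc => P0_zfree p0 hp0 (hc ▸ hv)) huv
  · -- pairwise disjoint
    intro p hp q hq hpq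
    obtain ⟨p0, hp0, rfl⟩ := Finset.mem_image.mp hp
    obtain ⟨q0, hq0, rfl⟩ := Finset.mem_image.mp hq
    have hpq0 : p0 ≠ q0 := fun hc => hpq (by rw [hc])
    have hd := P0_disjoint p0 hp0 q0 hq0 hpq0
    rw [Finset.disjoint_left]
    intro x hx1 hx2
    obtain ⟨u, hu, hue⟩ := Finset.mem_image.mp hx1
    obtain ⟨v, hv, hve⟩ := Finset.mem_image.mp hx2
    have huv : u = v := hψinj u v (fun hc => P0_zfree p0 hp0 (hc ▸ hu))
      (fun hc => P0_zfree q0 hq0 (hc ▸ hv)) (hue.trans hve.symm)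
    exact (Finset.disjoint_left.mp hd) hu (huv ▸ hv)
  · -- coverage
    intro x
    obtain ⟨p, hp, hmem⟩ := P0_cover (hφz x)
    refine ⟨Finset.image ψ p, Finset.mem_image_of_mem _ hp, ?_⟩
    rw [← hψφ x]
    exact Finset.mem_image_of_mem ψ hmem
  · -- the special pair and the others
    refine ⟨Finset.image ψ (e0 k), Finset.mem_image_of_mem _ he0P0, ?_, ?_⟩
    · have hE : isE0 k (((0:R k),(1:Fin 3)) : Y k) (((0:R k),(2:Fin 3)) : Y k) :=
        Or.inl ⟨rfl, rfl⟩
      rw [e0, Finset.image_insert, Finset.image_singleton,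
        hpair _ _ hz01 hz02, codeg_classify _ _ e0_pts_ne hz01 hz02, if_pos hE]
    · intro p hp hne
      obtain ⟨p0, hp0, rfl⟩ := Finset.mem_image.mp hp
      have hp0ne : p0 ≠ e0 k := fun hc => hne (by rw [hc])
      rcases P0_elim hp0 with rfl | ⟨v, l, hv, rfl⟩
      · exact absurd rfl hp0ne
      · rw [Finset.image_insert, Finset.image_singleton,
          hpair _ _ (hzrung v l hv) (hzrung (-v) l (neg_ne hv)),
          codeg_classify _ _ (rung_pts_ne hv l) (hzrung v l hv) (hzrung (-v) l (neg_ne hv))]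
        have hR : isRung k ((v,l) : Y k) ((-v,l) : Y k) := ⟨l, v, hv, rfl, rfl⟩
        rw [if_neg, if_pos hR]
        rintro (⟨h1, -⟩ | ⟨h1, -⟩) <;>
          (rw [Prod.mk.injEq] at h1
           exact hv h1.1)
  · -- all other pairs have codegree 3
    intro x y hxy hnp
    have hxy' : φ x ≠ φ y := fun hc => hxy (hφinj hc)
    rw [hcode x y hxy]
    have himgpair : ∀ a b : Y k, φ x = a → φ y = b →
        Finset.image ψ ({a, b} : Finset (Y k)) = {x, y} := by
      rintro a b rfl rfl
      rw [Finset.image_insert, Finset.image_singleton, hψφ, hψφ]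
    rw [if_neg, if_neg]
    · intro hR
      apply hnp
      have hm : ({φ x, φ y} : Finset (Y k)) ∈ P0 k :=
        (mem_P0_iff hxy').mpr (Or.inr hR)
      have := Finset.mem_image_of_mem (Finset.image ψ) hm
      rwa [himgpair _ _ rfl rfl] at this
    · intro hE
      apply hnp
      have hm : ({φ x, φ y} : Finset (Y k)) ∈ P0 k :=
        (mem_P0_iff hxy').mpr (Or.inl hE)
      have := Finset.mem_image_of_mem (Finset.image ψ) hm
      rwa [himgpair _ _ rfl rfl] at this


/-- for `ν ≡ 2 (mod 6)` there is a `PTS(ν, 3)` with exactly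
`(3·C(ν,2) − ν/2 − 2)/3` triples whose leave consists of `ν/2` pairwise disjoint
edges: a partition into `ν/2` pairs, one with codegree `0`, the rest with codegree `2`,
all other pairs with codegree `3`. -/
theorem stmt_13 (ν : ℕ) (hpos : 0 < ν) (hmod : ν % 6 = 2) :
    ∃ H : Multiset (Finset (Fin ν)),
      (∀ t ∈ H, t.card = 3) ∧
      (∀ x y : Fin ν, x ≠ y → codegPair H {x, y} ≤ 3) ∧
      Multiset.card H = (3 * ν.choose 2 - ν / 2 - 2) / 3 ∧
      ∃ P : Finset (Finset (Fin ν)),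
        P.card = ν / 2 ∧
        (∀ p ∈ P, p.card = 2) ∧
        (∀ p ∈ P, ∀ q ∈ P, p ≠ q → Disjoint p q) ∧
        (∀ v : Fin ν, ∃ p ∈ P, v ∈ p) ∧
        (∃ p₀ ∈ P, codegPair H p₀ = 0 ∧
          ∀ p ∈ P, p ≠ p₀ → codegPair H p = 2) ∧
        (∀ x y : Fin ν, x ≠ y → ({x, y} : Finset (Fin ν)) ∉ P →
          codegPair H {x, y} = 3) := by
  exact stmt_13' ν hpos hmod
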